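/- arXiv:2408.12265 — 2 statements merged into one kernel-verified Lean document; each statement's English description precedes it below -/
import Mathlib

section
/- For every n ≥ 3 and d ≥ 2, an n-qudit GHZ state can be transformed into an n-qudit L state by asymptotic SLOCC with rate one: ω(G(d,n), L(d,n)) = 1. -/
namespace QIT

noncomputable section

/-- The coordinate description of the rank-one (simple) tensor
`v 1 ⊗ ⋯ ⊗ v n` with local factors `v i : ℂ^{α i}`.  Throughout, a tensor in
`ℂ^{α 1} ⊗ ⋯ ⊗ ℂ^{α n}` (each local space `ℂ^{α i}` being the space `α i → ℂ`
with its standard basis) is identified with its coefficient array, a function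
`(∀ i, α i) → ℂ` on multi-indices. -/
def prodTensor {ι : Type} [Fintype ι] {α : ι → Type} (v : ∀ i, α i → ℂ) :
    (∀ i, α i) → ℂ :=
  fun j => ∏ i, v i (j i)

/-- `T` has tensor rank at most `r`: it is a sum of `r` simple tensors. -/
def HasRankLE {ι : Type} [Fintype ι] {α : ι → Type} (T : (∀ i, α i) → ℂ) (r : ℕ) : Prop :=
  ∃ v : Fin r → ∀ i, α i → ℂ, T = ∑ p, prodTensor (v p)

/-- The tensor rank of `T`. -/
def tensorRank {ι : Type} [Fintype ι] {α : ι → Type} (T : (∀ i, α i) → ℂ) : ℕ :=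
  sInf {r | HasRankLE T r}

/-- The border rank of `T`: the smallest `r` such that `T` is a limit of tensors
of rank at most `r`. -/
def borderRank {ι : Type} [Fintype ι] {α : ι → Type} (T : (∀ i, α i) → ℂ) : ℕ :=
  sInf {r | T ∈ closure {S : (∀ i, α i) → ℂ | HasRankLE S r}}

/-- The slice of `T` in the `i`-th factor determined by the multi-index `m`
(the value of `m` at `i` is irrelevant). -/
def sliceAt {ι : Type} [DecidableEq ι] {α : ι → Type} (T : (∀ i, α i) → ℂ) (i : ι)
    (m : ∀ j, α j) : α i → ℂ :=
  fun k => T (Function.update m i k)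

/-- `T ∈ V' ⊗ (⊗_{j ≠ i} V_j)` in the `i`-th factor: all `i`-th slices of `T`
lie in the subspace `V'`. -/
def FactorIn {ι : Type} [DecidableEq ι] {α : ι → Type} (T : (∀ i, α i) → ℂ) (i : ι)
    (V' : Submodule ℂ (α i → ℂ)) : Prop :=
  ∀ m : ∀ j, α j, sliceAt T i m ∈ V'

/-- `T` is concise in the `i`-th factor: `T ∉ V' ⊗ (⊗_{j ≠ i} V_j)` for every
proper subspace `V' ⊊ V_i`. -/
def Concise {ι : Type} [DecidableEq ι] {α : ι → Type} (T : (∀ i, α i) → ℂ) (i : ι) : Prop :=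
  ∀ V' : Submodule ℂ (α i → ℂ), FactorIn T i V' → V' = ⊤

/-- Contraction `⟨f|T` of the first factor of `T` with a covector `f`. -/
def contractFirst {n : ℕ} {α : Fin (n + 1) → Type} (f : (α 0 → ℂ) →ₗ[ℂ] ℂ)
    (T : (∀ i, α i) → ℂ) : (∀ i : Fin n, α i.succ) → ℂ :=
  fun m => f (fun k => T (Fin.cons k m))

/-- Persistent tensors, defined inductively: a bipartite tensor is persistent
iff it is `1`-concise; an `n`-partite tensor (`n > 2`) is persistent iff it is
`1`-concise and there is a proper subspace `S ⊊ V₁^∨` such that `⟨f|T` is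
persistent whenever `f ∉ S`. -/
def Persistent : {n : ℕ} → {α : Fin n → Type} → ((∀ i, α i) → ℂ) → Prop
  | 0, _, _ => False
  | 1, _, _ => False
  | 2, _, T => Concise T 0
  | (n + 3), α, T =>
      Concise T 0 ∧
      ∃ S : Submodule ℂ ((α 0 → ℂ) →ₗ[ℂ] ℂ), S ≠ ⊤ ∧
        ∀ f : (α 0 → ℂ) →ₗ[ℂ] ℂ, f ∉ S → Persistent (contractFirst f T)

/-- Apply the linear maps with matrices `A i` to the factors of `T`
(the coordinate form of `(A 1 ⊗ ⋯ ⊗ A n) T`). -/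
def applyLin {ι : Type} [Fintype ι] [DecidableEq ι] {α β : ι → Type} [∀ i, Fintype (α i)]
    (A : ∀ i, β i → α i → ℂ) (T : (∀ i, α i) → ℂ) : (∀ i, β i) → ℂ :=
  fun j => ∑ m : ∀ i, α i, (∏ i, A i (j i) (m i)) * T m

/-- `T` can be transformed into `S` via SLOCC. -/
def SLOCCto {ι : Type} [Fintype ι] [DecidableEq ι] {α β : ι → Type} [∀ i, Fintype (α i)]
    (T : (∀ i, α i) → ℂ) (S : (∀ i, β i) → ℂ) : Prop :=
  ∃ A : ∀ i, β i → α i → ℂ, applyLin A T = S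

/-- `T` degenerates into `S` via SLOCC: there are local maps `A i (ε)` with
entries polynomial in `ε` and an approximation degree `e` with
`lim_{ε → 0} ε⁻ᵉ (A 1 (ε) ⊗ ⋯ ⊗ A n (ε)) T = S`. -/
def Degenerates {ι : Type} [Fintype ι] [DecidableEq ι] {α β : ι → Type} [∀ i, Fintype (α i)]
    (T : (∀ i, α i) → ℂ) (S : (∀ i, β i) → ℂ) : Prop :=
  ∃ (A : ∀ i, β i → α i → Polynomial ℂ) (e : ℕ),
    Filter.Tendsto
      (fun ε : ℂ => (ε ^ e)⁻¹ • applyLin (fun i r c => (A i r c).eval ε) T)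
      (nhdsWithin 0 {0}ᶜ) (nhds S)

/-- The rank of the flattening of `T` across the bipartition `I | Iᶜ`. -/
def flatRank {ι : Type} [Fintype ι] [DecidableEq ι] {α : ι → Type}
    [∀ i, Fintype (α i)] (T : (∀ i, α i) → ℂ) (I : Finset ι) : ℕ :=
  Matrix.rank (Matrix.of fun (a : ∀ i : {x // x ∈ I}, α i.1) (b : ∀ i : {x // x ∉ I}, α i.1) =>
    T fun i => if h : i ∈ I then a ⟨i, h⟩ else b ⟨i, h⟩)

/-- The direct sum `T ⊕ S` of two `n`-partite tensors, a tensor with `i`-th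
local space `U_i ⊕ V_i`. -/
def directSum {ι : Type} [Fintype ι] {α β : ι → Type}
    (T : (∀ i, α i) → ℂ) (S : (∀ i, β i) → ℂ) : (∀ i, α i ⊕ β i) → ℂ :=
  fun j =>
    if h : ∀ i, (j i).isLeft then T (fun i => (j i).getLeft (h i))
    else if h' : ∀ i, (j i).isRight then S (fun i => (j i).getRight (h' i))
    else 0

/-- The Kronecker product `T ⊠ S` of two `n`-partite tensors, an `n`-partite
tensor with `i`-th local space `U_i ⊗ V_i`. -/
def kron {ι : Type} {α β : ι → Type} (T : (∀ i, α i) → ℂ) (S : (∀ i, β i) → ℂ) :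
    (∀ i, α i × β i) → ℂ :=
  fun j => T (fun i => (j i).1) * S (fun i => (j i).2)

/-- The outer (tensor) product `T ⊗ S` of an `n`-partite and an `m`-partite
tensor, regarded as an `(n+m)`-partite tensor. -/
def outer {ι κ : Type} {α : ι → Type} {β : κ → Type}
    (T : (∀ i, α i) → ℂ) (S : (∀ k, β k) → ℂ) :
    (∀ x : ι ⊕ κ, Sum.elim α β x) → ℂ :=
  fun j => T (fun i => j (Sum.inl i)) * S (fun k => j (Sum.inr k))

/-- The `m`-fold Kronecker power `T^{⊠ m}` of an `n`-partite tensor with all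
local spaces `ℂ^d`: an `n`-partite tensor with local spaces `(ℂ^d)^{⊗ m}`. -/
def kpow (d n : ℕ) (T : (Fin n → Fin d) → ℂ) (m : ℕ) :
    (Fin n → (Fin m → Fin d)) → ℂ :=
  fun j => ∏ t : Fin m, T (fun i => j i t)

/-- The `n`-qubit W state `W_n = Σ_{i} |0⟩^{⊗(n-i-1)} ⊗ |1⟩ ⊗ |0⟩^{⊗ i}`:
its coefficient on a multi-index is `1` iff exactly one entry is `1`. -/
def Wstate (n : ℕ) : (Fin n → Fin 2) → ℂ :=
  fun m => if (∑ i, (m i : ℕ)) = 1 then 1 else 0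

/-- The `n`-qudit GHZ state `G(d,n) = Σ_{j=0}^{d-1} |j⟩^{⊗ n}`. -/
def Gstate (d n : ℕ) : (Fin n → Fin d) → ℂ :=
  fun m => if ∃ j : Fin d, ∀ i, m i = j then 1 else 0

/-- The `n`-qudit L state `L(d,n) = Σ_{j₁+⋯+jₙ = d-1} |j₁ ⋯ jₙ⟩`. -/
def Lstate (d n : ℕ) : (Fin n → Fin d) → ℂ :=
  fun m => if (∑ i, (m i : ℕ)) = d - 1 then 1 else 0

/-- The `n`-qudit M state
`M(d,n) = Σᵢ |0⟩^{⊗(n-i-1)} |d-1⟩ |0⟩^{⊗ i}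
  + Σ_{i+k+l=n-2} Σ_{j=1}^{d-2} |0⟩^{⊗i} |j⟩ |0⟩^{⊗k} |d-j-1⟩ |0⟩^{⊗l}`:
its coefficient on a multi-index is `1` iff the entries sum to `d-1` and at
most two entries are nonzero. -/
def Mstate (d n : ℕ) : (Fin n → Fin d) → ℂ :=
  fun m =>
    if (∑ i, (m i : ℕ)) = d - 1 ∧
        (Finset.univ.filter fun i => (m i : ℕ) ≠ 0).card ≤ 2 then 1 else 0

/-- The `n`-qudit N state
`N(d,n) = |0⟩^{⊗(n-1)} |d-1⟩ + Σ_{i=0}^{n-2} Σ_{j=1}^{d-1} |0⟩^{⊗(n-i-2)} |j⟩ |0⟩^{⊗i} |d-j-1⟩`: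
its coefficient on a multi-index is `1` iff the entries sum to `d-1` and at
most one of the first `n-1` entries is nonzero. -/
def Nstate (d n : ℕ) : (Fin n → Fin d) → ℂ :=
  fun m =>
    if (∑ i, (m i : ℕ)) = d - 1 ∧
        (Finset.univ.filter fun i : Fin n => (i : ℕ) + 1 < n ∧ (m i : ℕ) ≠ 0).card ≤ 1
    then 1 else 0

/-- Apply a linear endomorphism `π` of the `i`-th local space to the `i`-th
factor of `T`, i.e. `(id^{⊗(i-1)} ⊗ π ⊗ id^{⊗(n-i)}) T`. -/
def applyAtFactor {ι : Type} [DecidableEq ι] {α : ι → Type}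
    (T : (∀ i, α i) → ℂ) (i : ι) (π : (α i → ℂ) →ₗ[ℂ] (α i → ℂ)) :
    (∀ j, α j) → ℂ :=
  fun j => π (sliceAt T i j) (j i)

end

theorem sum_indicator_range {β γ : Type} [Fintype β] [Fintype γ] [DecidableEq γ] (h : β ↪ γ)
    (g : γ → ℂ) : ∑ c : γ, (if ∃ b, h b = c then g c else 0) = ∑ b, g (h b) := by
  classical
  rw [Finset.sum_ite, Finset.sum_const_zero, add_zero]
  rw [show Finset.univ.filter (fun c => ∃ b, h b = c) = Finset.univ.map h by ext c; simp]
  rw [Finset.sum_map]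

theorem kpow_G_eq {d n m : ℕ} (hn : 0 < n) (j : Fin n → (Fin m → Fin d)) :
    kpow d n (Gstate d n) m j = if ∃ κ : Fin m → Fin d, ∀ i, j i = κ then 1 else 0 := by
  classical
  unfold kpow Gstate
  rw [Finset.prod_boole]
  congr 1
  simp only [eq_iff_iff]
  constructor
  · intro h
    choose c hc using fun t => h t (Finset.mem_univ t)
    exact ⟨c, fun i => funext fun t => hc t i⟩
  · rintro ⟨κ, hκ⟩ t _
    exact ⟨κ t, fun i => by rw [hκ i]⟩

theorem applyLin_kpowG {d n m : ℕ} (hn : 0 < n) {β : Fin n → Type}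
    (A : ∀ i, β i → (Fin m → Fin d) → ℂ) (j : ∀ i, β i) :
    applyLin A (kpow d n (Gstate d n) m) j = ∑ κ : Fin m → Fin d, ∏ i, A i (j i) κ := by
  classical
  unfold applyLin
  have hdiag : Function.Injective (fun (κ : Fin m → Fin d) (_ : Fin n) => κ) := by
    intro a b hab
    exact congrFun hab ⟨0, hn⟩
  calc ∑ mi : Fin n → (Fin m → Fin d), (∏ i, A i (j i) (mi i)) * kpow d n (Gstate d n) m mi
      = ∑ mi : Fin n → (Fin m → Fin d),
          (if ∃ κ : Fin m → Fin d, (fun _ => κ) = mi then (∏ i, A i (j i) (mi i)) else 0) := by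
        refine Finset.sum_congr rfl fun mi _ => ?_
        rw [kpow_G_eq hn]
        by_cases h : ∃ κ : Fin m → Fin d, ∀ i, mi i = κ
        · obtain ⟨κ, hκ⟩ := h
          rw [if_pos ⟨κ, hκ⟩, if_pos ⟨κ, (funext fun i => (hκ i).symm)⟩, mul_one]
        · rw [if_neg h, if_neg, mul_zero]
          rintro ⟨κ, hκ⟩
          exact h ⟨κ, fun i => (congrFun hκ i).symm⟩
    _ = ∑ κ : Fin m → Fin d, ∏ i, A i (j i) κ := by
        simpa using sum_indicator_range ⟨fun κ _ => κ, hdiag⟩ (fun mi => ∏ i, A i (j i) (mi i))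

theorem hasRankLE_card {ι : Type} [Fintype ι] {α : ι → Type} {T : (∀ i, α i) → ℂ}
    {γ : Type} [Fintype γ] (w : γ → ∀ i, α i → ℂ) (hT : T = ∑ p, prodTensor (w p)) :
    HasRankLE T (Fintype.card γ) := by
  refine ⟨fun p => w ((Fintype.equivFin γ).symm p), ?_⟩
  rw [hT, ← Equiv.sum_comp (Fintype.equivFin γ).symm (fun p => prodTensor (w p))]

theorem hasRankLE_of_slocc_G {d n m : ℕ} (hn : 0 < n) {β : Fin n → Type}
    {T : (∀ i, β i) → ℂ} (h : SLOCCto (kpow d n (Gstate d n) m) T) :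
    HasRankLE T (d ^ m) := by
  classical
  obtain ⟨A, hA⟩ := h
  have hcard : Fintype.card (Fin m → Fin d) = d ^ m := by simp
  rw [← hcard]
  refine hasRankLE_card (fun κ i x => A i x κ) ?_
  funext j
  rw [← hA, applyLin_kpowG hn]
  simp [prodTensor]

theorem sum_dindicator_range {β γ : Type} [Fintype β] [Fintype γ] [DecidableEq γ]
    (h : β ↪ γ) (g : ∀ c : γ, (∃ b, h b = c) → ℂ) :
    (∑ c : γ, if hc : ∃ b, h b = c then g c hc else 0) = ∑ b, g (h b) ⟨b, rfl⟩ := by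
  classical
  have hv := Finset.sum_subset (Finset.subset_univ (Finset.univ.map h))
    (f := fun c => if hc : ∃ b, h b = c then g c hc else 0)
    (fun c _ hc => dif_neg (by simpa using hc))
  rw [← hv, Finset.sum_map]
  exact Finset.sum_congr rfl fun b _ => dif_pos ⟨b, rfl⟩

theorem slocc_G_of_hasRankLE {d n m r : ℕ} (hn : 0 < n) {β : Fin n → Type}
    {T : (∀ i, β i) → ℂ} (h : HasRankLE T r) (hr : r ≤ d ^ m) :
    SLOCCto (kpow d n (Gstate d n) m) T := by
  classical
  obtain ⟨v, hv⟩ := h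
  have hcard : Fintype.card (Fin r) ≤ Fintype.card (Fin m → Fin d) := by simpa using hr
  obtain ⟨e⟩ := Function.Embedding.nonempty_of_card_le hcard
  refine ⟨fun i x κ => if h : ∃ p, e p = κ then v h.choose i x else 0, ?_⟩
  funext j
  rw [applyLin_kpowG hn]
  have step : ∀ κ : Fin m → Fin d,
      (∏ i, if h : ∃ p, e p = κ then v h.choose i (j i) else 0)
        = if hc : ∃ p, e p = κ then prodTensor (v hc.choose) j else 0 := by
    intro κ
    by_cases hc : ∃ p, e p = κ
    · rw [dif_pos hc]
      exact Finset.prod_congr rfl fun i _ => dif_pos hc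
    · rw [dif_neg hc]
      refine Finset.prod_eq_zero (Finset.mem_univ ⟨0, hn⟩) (dif_neg hc)
  calc (∑ κ : Fin m → Fin d, ∏ i, if h : ∃ p, e p = κ then v h.choose i (j i) else 0)
      = ∑ κ : Fin m → Fin d,
        if hc : ∃ p, e p = κ then prodTensor (v hc.choose) j else 0 :=
        Finset.sum_congr rfl fun κ _ => step κ
    _ = ∑ p : Fin r, prodTensor (v (⟨p, rfl⟩ : ∃ p', e p' = e p).choose) j :=
        by convert sum_dindicator_range e (fun κ hc => prodTensor (v hc.choose) j)
    _ = ∑ p : Fin r, prodTensor (v p) j := by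
        refine Finset.sum_congr rfl fun p _ => ?_
        rw [e.injective (⟨p, rfl⟩ : ∃ p', e p' = e p).choose_spec]
    _ = T j := by rw [hv]; simp

theorem pow_le_of_hasRankLE_kpowL {d n N r : ℕ} (hd : 2 ≤ d) (hn : 2 ≤ n)
    (h : HasRankLE (kpow d n (Lstate d n) N) r) : d ^ N ≤ r := by
  classical
  obtain ⟨v, hv⟩ := h
  set i0 : Fin n := ⟨0, by omega⟩ with hi0
  set i1 : Fin n := ⟨1, by omega⟩ with hi1
  have hne : i0 ≠ i1 := by simp [hi0, hi1, Fin.ext_iff]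
  set J : (Fin N → Fin d) → (Fin N → Fin d) → (Fin n → (Fin N → Fin d)) :=
    fun a b i => if i = i0 then a else if i = i1 then (fun t => ⟨d - 1 - (b t : ℕ), by omega⟩)
      else (fun _ => ⟨0, by omega⟩) with hJ
  have key : ∀ a b, kpow d n (Lstate d n) N (J a b) = if a = b then 1 else 0 := by
    intro a b
    unfold kpow Lstate
    rw [Finset.prod_boole]
    have hsum : ∀ t : Fin N, (∑ i, ((J a b i t : ℕ))) = (a t : ℕ) + (d - 1 - (b t : ℕ)) := by
      intro t
      refine Fintype.sum_eq_add i0 i1 hne ?_ |>.trans ?_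
      · intro i ⟨h0, h1⟩
        simp [hJ, h0, h1]
      · simp [hJ, hne, hne.symm]
    congr 1
    simp only [eq_iff_iff]
    constructor
    · intro hall
      funext t
      have := hall t (Finset.mem_univ t)
      rw [hsum t] at this
      have hb : (b t : ℕ) < d := (b t).isLt
      have ha : (a t : ℕ) < d := (a t).isLt
      exact Fin.ext (by omega)
    · rintro rfl t _
      rw [hsum t]
      have hb : (a t : ℕ) < d := (a t).isLt
      omega
  set X : Matrix (Fin N → Fin d) (Fin r) ℂ := Matrix.of fun a p => v p i0 a with hX
  set Y : Matrix (Fin r) (Fin N → Fin d) ℂ :=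
    Matrix.of fun p b => ∏ i ∈ Finset.univ.erase i0, v p i (J b b i) with hY
  have hXY : X * Y = 1 := by
    ext a b
    have : (X * Y) a b = ∑ p, ∏ i, v p i (J a b i) := by
      rw [Matrix.mul_apply]
      refine Finset.sum_congr rfl fun p _ => ?_
      rw [← Finset.mul_prod_erase Finset.univ _ (Finset.mem_univ i0)]
      have : J a b i0 = a := by simp [hJ]
      rw [this]
      congr 1
      rw [hY]
      simp only [Matrix.of_apply]
      refine Finset.prod_congr rfl fun i hi => ?_
      have hi0' : i ≠ i0 := (Finset.mem_erase.1 hi).1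
      congr 1
      simp [hJ, hi0']
    rw [this]
    have : (∑ p, ∏ i, v p i (J a b i)) = kpow d n (Lstate d n) N (J a b) := by
      rw [hv]; simp [prodTensor]
    rw [this, key a b, Matrix.one_apply]
  have h1 : ((1 : Matrix (Fin N → Fin d) (Fin N → Fin d) ℂ)).rank
      = Fintype.card (Fin N → Fin d) := Matrix.rank_one
  have h2 : Fintype.card (Fin N → Fin d) = d ^ N := by simp
  calc d ^ N = ((1 : Matrix (Fin N → Fin d) (Fin N → Fin d) ℂ)).rank := by rw [h1, h2]
    _ = (X * Y).rank := by rw [hXY]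
    _ ≤ X.rank := Matrix.rank_mul_le_left X Y
    _ ≤ Fintype.card (Fin r) := Matrix.rank_le_card_width X
    _ = r := Fintype.card_fin r

theorem sum_pow_roots {d : ℕ} (hd : 0 < d) (z : ℂ) (hz : z ^ d = 1) :
    ∑ u : Fin d, z ^ (u : ℕ) = if z = 1 then (d : ℂ) else 0 := by
  by_cases h1 : z = 1
  · simp [h1]
  · rw [if_neg h1, Fin.sum_univ_eq_sum_range (fun k => z ^ k) d, geom_sum_eq h1, hz]
    simp

theorem exists_dual_pow (D K : ℕ) (hK : K ≤ D) :
    ∃ lam : Fin (D + 1) → ℂ, ∀ k : ℕ, k ≤ D →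
      ∑ s : Fin (D + 1), lam s * (s : ℂ) ^ k = if k = K then 1 else 0 := by
  classical
  set V : Matrix (Fin (D + 1)) (Fin (D + 1)) ℂ :=
    Matrix.transpose (Matrix.vandermonde (fun s : Fin (D + 1) => (s : ℂ))) with hV
  have hdet : IsUnit V.det := by
    rw [hV, Matrix.det_transpose]
    refine (Matrix.det_vandermonde_ne_zero_iff.mpr ?_).isUnit
    intro a b hab
    simp only at hab
    have : (a : ℕ) = b := by exact_mod_cast hab
    exact Fin.ext this
  set lam : Fin (D + 1) → ℂ := V⁻¹.mulVec (Pi.single ⟨K, by omega⟩ 1) with hlam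
  refine ⟨lam, fun k hk => ?_⟩
  have hmv : V.mulVec lam = Pi.single ⟨K, by omega⟩ 1 := by
    rw [hlam, Matrix.mulVec_mulVec, Matrix.mul_nonsing_inv V hdet, Matrix.one_mulVec]
  have h2 := congrFun hmv ⟨k, by omega⟩
  rw [Matrix.mulVec, dotProduct] at h2
  simp only [hV, Matrix.transpose_apply, Matrix.vandermonde_apply, Fin.val_mk] at h2
  calc ∑ s : Fin (D+1), lam s * (s : ℂ) ^ k
      = ∑ s : Fin (D+1), (s : ℂ) ^ k * lam s :=
        Finset.sum_congr rfl fun s _ => mul_comm _ _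
    _ = if k = K then 1 else 0 := by
        rw [h2, Pi.single_apply]
        rcases eq_or_ne k K with rfl | hne
        · rw [if_pos rfl, if_pos rfl]
        · rw [if_neg hne, if_neg (by simp [Fin.ext_iff]; omega)]

theorem hasRankLE_kpowL (d n N : ℕ) (hd : 2 ≤ d) (hn : 0 < n) :
    HasRankLE (kpow d n (Lstate d n) N) (d ^ N * (N * (n * (d - 1)) + 1)) := by
  classical
  set D := N * (n * (d - 1)) with hD
  set K := N * (d - 1) with hKdef
  have hK : K ≤ D := Nat.mul_le_mul_left N (Nat.le_mul_of_pos_left _ hn)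
  obtain ⟨lam, hlam⟩ := exists_dual_pow D K hK
  set ζ : ℂ := Complex.exp (2 * Real.pi * Complex.I / d) with hζdef
  have hζ : IsPrimitiveRoot ζ d := Complex.isPrimitiveRoot_exp d (by omega)
  have hζd : ζ ^ d = 1 := hζ.pow_eq_one
  have hζ0 : ζ ≠ 0 := Complex.exp_ne_zero _
  set i0 : Fin n := ⟨0, hn⟩ with hi0
  set w : ((Fin N → Fin d) × Fin (D + 1)) → ∀ _ : Fin n, (Fin N → Fin d) → ℂ :=
    fun p i κ =>
      (if i = i0 then lam p.2 * ∏ t, ((d : ℂ)⁻¹ * (ζ ^ ((d - 1) * (p.1 t : ℕ)))⁻¹) else 1) *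
        ∏ t, (((p.2 : ℕ) : ℂ) * ζ ^ (p.1 t : ℕ)) ^ (κ t : ℕ) with hw
  have hcard : Fintype.card ((Fin N → Fin d) × Fin (D + 1)) = d ^ N * (D + 1) := by
    simp [Fintype.card_fun]
  rw [← hcard]
  refine hasRankLE_card w ?_
  funext j
  set e : Fin N → ℕ := fun t => ∑ i, (j i t : ℕ) with he
  set E := ∑ t, e t with hE
  have heb : ∀ t, e t ≤ n * (d - 1) := by
    intro t
    calc e t ≤ ∑ _i : Fin n, (d - 1) :=
          Finset.sum_le_sum fun i _ => by have := (j i t).isLt; omega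
      _ = n * (d - 1) := by simp [Finset.sum_const, mul_comm]
  have hEb : E ≤ D := by
    rw [hE, hD]
    calc ∑ t, e t ≤ ∑ _t : Fin N, n * (d - 1) := Finset.sum_le_sum fun t _ => heb t
      _ = N * (n * (d - 1)) := by simp [Finset.sum_const, mul_comm]
  have hterm : ∀ p : (Fin N → Fin d) × Fin (D + 1),
      prodTensor (w p) j = (lam p.2 * ((p.2 : ℕ) : ℂ) ^ E) *
        ∏ t, ((d : ℂ)⁻¹ * ((ζ ^ (e t) * (ζ ^ (d - 1))⁻¹) ^ ((p.1 t : ℕ)))) := by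
    rintro ⟨σ, s⟩
    unfold prodTensor
    simp only [hw]
    rw [Finset.prod_mul_distrib]
    rw [Finset.prod_ite_eq' Finset.univ i0
      (fun _ => lam s * ∏ t, ((d : ℂ)⁻¹ * (ζ ^ ((d - 1) * (σ t : ℕ)))⁻¹)),
      if_pos (Finset.mem_univ i0)]
    have swap : (∏ i, ∏ t, ((((s : ℕ) : ℂ)) * ζ ^ (σ t : ℕ)) ^ ((j i t : ℕ)))
        = ∏ t, ((((s : ℕ) : ℂ)) * ζ ^ (σ t : ℕ)) ^ (e t) := by
      rw [Finset.prod_comm]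
      exact Finset.prod_congr rfl fun t _ => Finset.prod_pow_eq_pow_sum _ _ _
    rw [swap, mul_assoc, ← Finset.prod_mul_distrib]
    have point : ∀ t : Fin N,
        ((d : ℂ)⁻¹ * (ζ ^ ((d - 1) * (σ t : ℕ)))⁻¹) * ((((s : ℕ) : ℂ)) * ζ ^ (σ t : ℕ)) ^ (e t)
          = (((s : ℕ) : ℂ)) ^ (e t) *
            ((d : ℂ)⁻¹ * ((ζ ^ (e t) * (ζ ^ (d - 1))⁻¹) ^ ((σ t : ℕ)))) := by
      intro t
      have h1 : (ζ ^ ((d - 1) * (σ t : ℕ)))⁻¹ = ((ζ ^ (d - 1))⁻¹) ^ (σ t : ℕ) := by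
        rw [pow_mul, inv_pow]
      have h2 : ((((s : ℕ) : ℂ)) * ζ ^ (σ t : ℕ)) ^ (e t)
          = (((s : ℕ) : ℂ)) ^ (e t) * (ζ ^ (e t)) ^ (σ t : ℕ) := by
        rw [mul_pow, pow_right_comm]
      rw [h1, h2, mul_pow]
      ring
    rw [Finset.prod_congr rfl fun t _ => point t, Finset.prod_mul_distrib,
      Finset.prod_pow_eq_pow_sum, ← hE]
    ring
  have hLHS : kpow d n (Lstate d n) N j = if ∀ t, e t = d - 1 then 1 else 0 := by
    unfold kpow Lstate
    rw [Finset.prod_boole]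
    congr 1
    simp [he, eq_iff_iff]
  have hround : ∀ t : Fin N,
      (∑ u : Fin d, (d : ℂ)⁻¹ * ((ζ ^ (e t) * (ζ ^ (d - 1))⁻¹) ^ ((u : ℕ))))
        = if d ∣ e t + 1 then 1 else 0 := by
    intro t
    set z : ℂ := ζ ^ (e t) * (ζ ^ (d - 1))⁻¹ with hz
    have hzd : z ^ d = 1 := by
      rw [hz, mul_pow, ← pow_mul, mul_comm (e t) d, pow_mul, hζd, one_pow, inv_pow, ← pow_mul,
        mul_comm (d - 1) d, pow_mul, hζd, one_pow, inv_one, mul_one]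
    have hznd : ζ ^ (d - 1) ≠ 0 := pow_ne_zero _ hζ0
    have hiff : z = 1 ↔ d ∣ e t + 1 := by
      rw [hz, mul_inv_eq_one₀ hznd]
      rw [← hζ.pow_eq_one_iff_dvd]
      constructor
      · intro h
        rw [pow_succ, h, ← pow_succ]
        have : d - 1 + 1 = d := by omega
        rw [this, hζd]
      · intro h
        have h2 : ζ ^ (e t) * ζ = ζ ^ (d - 1) * ζ := by
          rw [← pow_succ, ← pow_succ, h.trans hζd.symm]
          congr 1
          omega
        exact mul_right_cancel₀ hζ0 h2
    rw [← Finset.mul_sum, sum_pow_roots (by omega : 0 < d) z hzd]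
    by_cases h1 : z = 1
    · rw [if_pos h1, if_pos (hiff.1 h1), inv_mul_cancel₀ (by exact_mod_cast (by omega : d ≠ 0))]
    · rw [if_neg h1, if_neg (fun h => h1 (hiff.2 h)), mul_zero]
  have hRHS : (∑ p : (Fin N → Fin d) × Fin (D + 1), prodTensor (w p) j)
      = (if E = K then 1 else 0) * (if ∀ t, d ∣ e t + 1 then 1 else 0) := by
    rw [Finset.sum_congr rfl fun p _ => hterm p, Fintype.sum_prod_type]
    have step1 : ∀ σ : Fin N → Fin d,
        (∑ s : Fin (D + 1), (lam s * ((s : ℕ) : ℂ) ^ E) *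
          ∏ t, ((d : ℂ)⁻¹ * ((ζ ^ (e t) * (ζ ^ (d - 1))⁻¹) ^ ((σ t : ℕ)))))
        = (if E = K then 1 else 0) *
          ∏ t, ((d : ℂ)⁻¹ * ((ζ ^ (e t) * (ζ ^ (d - 1))⁻¹) ^ ((σ t : ℕ)))) := by
      intro σ
      rw [← Finset.sum_mul, hlam E hEb]
    rw [Finset.sum_congr rfl fun σ _ => step1 σ, ← Finset.mul_sum]
    congr 1
    rw [(Fintype.prod_sum (fun (t : Fin N) (u : Fin d) =>
      (d : ℂ)⁻¹ * ((ζ ^ (e t) * (ζ ^ (d - 1))⁻¹) ^ ((u : ℕ))))).symm]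
    rw [Finset.prod_congr rfl fun t _ => hround t, Finset.prod_boole]
    simp
  rw [hLHS, Finset.sum_apply, hRHS]
  by_cases hall : ∀ t, e t = d - 1
  · rw [if_pos hall, if_pos, if_pos, mul_one]
    · intro t
      rw [hall t]
      exact ⟨1, by omega⟩
    · rw [hE, hKdef, Finset.sum_congr rfl fun t _ => hall t]
      simp [mul_comm]
  · rw [if_neg hall]
    by_cases hdiv : ∀ t, d ∣ e t + 1
    · rw [if_pos hdiv, mul_one, if_neg]
      intro hEK
      apply hall
      have hge : ∀ t, d - 1 ≤ e t := fun t => by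
        have := Nat.le_of_dvd (by omega) (hdiv t)
        omega
      have hsum' : (∑ _t : Fin N, (d - 1)) = ∑ t, e t := by
        rw [← hE, hEK, hKdef]
        simp [mul_comm]
      intro t
      exact ((Finset.sum_eq_sum_iff_of_le fun i _ => hge i).1 hsum' t (Finset.mem_univ t)).symm
    · rw [if_neg hdiv, mul_zero]

open Filter in
theorem clog_div_tendsto (d c : ℕ) (hd : 1 < d) (hc : 0 < c) :
    Tendsto (fun N : ℕ => (Nat.clog d (c * N + 1) : ℝ) / N) atTop (nhds 0) := by
  have hd' : (1 : ℝ) < d := by exact_mod_cast hd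
  have hlogd : 0 < Real.log d := Real.log_pos hd'
  have h1 : Tendsto (fun x : ℝ => Real.log x / x) atTop (nhds 0) := by
    simpa using Real.isLittleO_log_id_atTop.tendsto_div_nhds_zero
  have h2 : Tendsto (fun N : ℕ => Real.log N / N) atTop (nhds 0) :=
    h1.comp tendsto_natCast_atTop_atTop
  have h3 : Tendsto (fun N : ℕ => Real.log (c + 1) / N) atTop (nhds 0) :=
    tendsto_const_div_atTop_nhds_zero_nat _
  have h4 : Tendsto (fun N : ℕ => (1 : ℝ) / N) atTop (nhds 0) :=
    tendsto_const_div_atTop_nhds_zero_nat _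
  have hub : Tendsto (fun N : ℕ =>
      (Real.log (c + 1) / N + Real.log N / N) * (1 / Real.log d) + 1 / N)
      atTop (nhds 0) := by
    have := ((h3.add h2).mul_const (1 / Real.log d)).add h4
    simpa using this
  refine tendsto_of_tendsto_of_tendsto_of_le_of_le' tendsto_const_nhds hub ?_ ?_
  · filter_upwards with N
    positivity
  · filter_upwards [eventually_ge_atTop 1] with N hN
    have hN' : (0 : ℝ) < N := by exact_mod_cast hN
    set g := Nat.clog d (c * N + 1) with hg
    have key : (g : ℝ) ≤ (Real.log (c + 1) + Real.log N) / Real.log d + 1 := by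
      have hnn1 : (0 : ℝ) ≤ Real.log (c + 1) := by
        have : ((c + 1 : ℕ) : ℝ) = (c : ℝ) + 1 := by push_cast; ring
        rw [← this]
        exact Real.log_natCast_nonneg _
      have hnn2 : (0 : ℝ) ≤ Real.log N := Real.log_natCast_nonneg _
      rcases Nat.eq_zero_or_pos g with hg0 | hg1
      · rw [hg0]
        push_cast
        positivity
      · have hx : 1 < c * N + 1 := by
          have : 0 < c * N := Nat.mul_pos hc hN
          omega
        have hpow : d ^ (g - 1) < c * N + 1 := Nat.pow_pred_clog_lt_self hd hx
        have hpowR : ((d : ℝ)) ^ (g - 1) ≤ ((c * N + 1 : ℕ) : ℝ) := by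
          exact_mod_cast Nat.le_of_lt hpow
        have hlog1 : ((g - 1 : ℕ) : ℝ) * Real.log d ≤ Real.log ((c * N + 1 : ℕ) : ℝ) := by
          rw [← Real.log_pow]
          exact Real.log_le_log (by positivity) hpowR
        have hlog2 : Real.log ((c * N + 1 : ℕ) : ℝ) ≤ Real.log (c + 1) + Real.log N := by
          have hle : ((c * N + 1 : ℕ) : ℝ) ≤ ((c : ℝ) + 1) * N := by
            have : c * N + 1 ≤ (c + 1) * N := by nlinarith
            exact_mod_cast this
          calc Real.log ((c * N + 1 : ℕ) : ℝ) ≤ Real.log (((c : ℝ) + 1) * N) :=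
                Real.log_le_log (by positivity) hle
            _ = Real.log ((c : ℝ) + 1) + Real.log N :=
                Real.log_mul (by positivity) (by positivity)
        have hcast : ((g - 1 : ℕ) : ℝ) = (g : ℝ) - 1 := by
          have : (1 : ℕ) ≤ g := hg1
          push_cast [Nat.cast_sub this]
          ring
        rw [hcast] at hlog1
        have : (g : ℝ) - 1 ≤ (Real.log (c + 1) + Real.log N) / Real.log d := by
          rw [le_div_iff₀ hlogd]
          calc ((g : ℝ) - 1) * Real.log d ≤ Real.log ((c * N + 1 : ℕ) : ℝ) := hlog1
            _ ≤ Real.log (c + 1) + Real.log N := hlog2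
        linarith
    calc (g : ℝ) / N ≤ ((Real.log (c + 1) + Real.log N) / Real.log d + 1) / N := by
          exact (div_le_div_iff_of_pos_right hN').mpr key
      _ = (Real.log (c + 1) / N + Real.log N / N) * (1 / Real.log d) + 1 / N := by
          ring

/-- `ω(G(d,n), L(d,n)) = 1`: the `n`-qudit GHZ state transforms
into the `n`-qudit L state by asymptotic SLOCC with rate one, where
`ω(ψ,φ) = lim_{N→∞} (1/N)·inf{ m | ψ^{⊠m} → φ^{⊠N} via SLOCC }`. -/
theorem GHZ_to_L_asymptotic_rate_one (d n : ℕ) (hd : 2 ≤ d) (hn : 3 ≤ n) :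
    Filter.Tendsto (fun N : ℕ =>
        ((sInf {m : ℕ | SLOCCto (kpow d n (Gstate d n) m) (kpow d n (Lstate d n) N)} : ℕ) : ℝ)
          / (N : ℝ)) Filter.atTop (nhds 1) := by
  classical
  have hn0 : 0 < n := by omega
  set c := n * (d - 1) with hc
  have hc0 : 0 < c := by
    have h1 : 1 ≤ d - 1 := by omega
    exact Nat.mul_pos (by omega) h1
  set S : ℕ → Set ℕ := fun N =>
    {m : ℕ | SLOCCto (kpow d n (Gstate d n) m) (kpow d n (Lstate d n) N)} with hS
  set mfun : ℕ → ℕ := fun N => N + Nat.clog d (c * N + 1) with hmfun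
  have hmem : ∀ N, mfun N ∈ S N := by
    intro N
    have hrank : HasRankLE (kpow d n (Lstate d n) N) (d ^ N * (N * (n * (d - 1)) + 1)) :=
      hasRankLE_kpowL d n N hd hn0
    have hle : d ^ N * (N * (n * (d - 1)) + 1) ≤ d ^ mfun N := by
      rw [hmfun, pow_add]
      refine Nat.mul_le_mul_left _ ?_
      rw [show N * (n * (d - 1)) = c * N from by rw [hc]; ring]
      exact Nat.le_pow_clog (by omega) _
    exact slocc_G_of_hasRankLE hn0 hrank hle
  have hlow : ∀ N, ∀ m ∈ S N, N ≤ m := by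
    intro N m hm
    have h1 : HasRankLE (kpow d n (Lstate d n) N) (d ^ m) := hasRankLE_of_slocc_G hn0 hm
    have h2 : d ^ N ≤ d ^ m := pow_le_of_hasRankLE_kpowL hd (by omega) h1
    exact (Nat.pow_le_pow_iff_right (by omega : 1 < d)).1 h2
  have hub : ∀ N, sInf (S N) ≤ mfun N := fun N => Nat.sInf_le (hmem N)
  have hlb : ∀ N, N ≤ sInf (S N) := fun N => hlow N _ (Nat.sInf_mem ⟨mfun N, hmem N⟩)
  have hupper : Filter.Tendsto (fun N : ℕ => 1 + (Nat.clog d (c * N + 1) : ℝ) / N)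
      Filter.atTop (nhds 1) := by
    have := (clog_div_tendsto d c (by omega) hc0).const_add (1 : ℝ)
    simpa using this
  refine tendsto_of_tendsto_of_tendsto_of_le_of_le' tendsto_const_nhds hupper ?_ ?_
  · filter_upwards [Filter.eventually_ge_atTop 1] with N hN
    have hN' : (0 : ℝ) < N := by exact_mod_cast hN
    rw [le_div_iff₀ hN', one_mul]
    exact_mod_cast hlb N
  · filter_upwards [Filter.eventually_ge_atTop 1] with N hN
    have hN' : (0 : ℝ) < N := by exact_mod_cast hN
    have h1 : ((sInf (S N) : ℕ) : ℝ) ≤ ((mfun N : ℕ) : ℝ) := by exact_mod_cast hub N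
    calc ((sInf (S N) : ℕ) : ℝ) / N ≤ ((mfun N : ℕ) : ℝ) / N :=
          (div_le_div_iff_of_pos_right hN').mpr h1
      _ = 1 + (Nat.clog d (c * N + 1) : ℝ) / N := by
          rw [hmfun]
          push_cast
          field_simp

end QIT
end

section
/- Let P ∈ V₁⊗⋯⊗Vₙ be a persistent tensor of the minimum possible rank, rk(P) = Σ_{k=1}^{n−1}(dim V_k − 1) + 1. Then for every tensor T ∈ U₁⊗⋯⊗Uₙ the tensor rank is additive: rk(T⊕P) = rk(T) + rk(P). -/
namespace QIT

section Aux
open Finset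

variable {ι : Type} [Fintype ι] [DecidableEq ι]

section RankBasics

variable {α : ι → Type}

lemma prodTensor_eq_zero {v : ∀ i, α i → ℂ} (c : ι) (h : v c = 0) :
    prodTensor v = 0 := by
  funext m
  show (∏ i, v i (m i)) = 0
  apply Finset.prod_eq_zero (Finset.mem_univ c)
  rw [h]; rfl

lemma hasRankLE_sum_prod {P : Type} [DecidableEq P] (s : Finset P)
    (w : P → ∀ i, α i → ℂ) :
    HasRankLE (∑ p ∈ s, prodTensor (w p)) s.card := by
  refine ⟨fun q => w (s.equivFin.symm q), ?_⟩
  rw [← Finset.sum_coe_sort s (fun p => prodTensor (w p)),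
    ← Equiv.sum_comp s.equivFin.symm (fun (p : s) => prodTensor (w (p : P)))]

lemma hasRankLE_pred {r : ℕ} {T : (∀ i, α i) → ℂ} (w : Fin r → ∀ i, α i → ℂ)
    (hT : T = ∑ p, prodTensor (w p)) (p₀ : Fin r) (hz : prodTensor (w p₀) = 0) :
    HasRankLE T (r - 1) := by
  have h1 : T = ∑ p ∈ Finset.univ.erase p₀, prodTensor (w p) := by
    rw [hT, ← Finset.add_sum_erase _ _ (Finset.mem_univ p₀), hz, zero_add]
  have h2 := hasRankLE_sum_prod (Finset.univ.erase p₀) w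
  rwa [Finset.card_erase_of_mem (Finset.mem_univ _), Finset.card_univ,
    Fintype.card_fin, ← h1] at h2

lemma hasRankLE_all [Nonempty ι] [∀ i, Fintype (α i)] (T : (∀ i, α i) → ℂ) :
    HasRankLE T (Fintype.card (∀ i, α i)) := by
  classical
  obtain ⟨i₀⟩ := ‹Nonempty ι›
  have hT : T = ∑ m₀ : ∀ i, α i,
      prodTensor (fun i a => if a = m₀ i then (if i = i₀ then T m₀ else 1) else 0) := by
    funext m
    rw [Finset.sum_apply]
    rw [Finset.sum_eq_single m]
    · show T m = ∏ i, _
      rw [Finset.prod_congr rfl (g := fun i => if i = i₀ then T m else 1)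
        (fun i _ => by simp)]
      rw [Finset.prod_ite_eq' Finset.univ i₀ (fun _ => T m)]
      simp
    · intro m₀ _ hne
      have : ∃ i, m i ≠ m₀ i := by
        by_contra hc
        push_neg at hc
        exact hne (funext fun i => (hc i)).symm
      obtain ⟨i, hi⟩ := this
      apply Finset.prod_eq_zero (Finset.mem_univ i)
      simp [hi]
    · intro h; exact absurd (Finset.mem_univ m) h
  have := hasRankLE_sum_prod (Finset.univ : Finset (∀ i, α i))
      (fun m₀ => (fun i a => if a = m₀ i then (if i = i₀ then T m₀ else 1) else 0))
  rwa [Finset.card_univ, ← hT] at this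

lemma hasRankLE_tensorRank [Nonempty ι] [∀ i, Fintype (α i)] (T : (∀ i, α i) → ℂ) :
    HasRankLE T (tensorRank T) :=
  Nat.sInf_mem (s := {r | HasRankLE T r}) ⟨_, hasRankLE_all T⟩

lemma tensorRank_le_of {T : (∀ i, α i) → ℂ} {r : ℕ} (h : HasRankLE T r) :
    tensorRank T ≤ r :=
  Nat.sInf_le h

end RankBasics

end Aux
section Aux2
open Finset

variable {ι : Type} [Fintype ι] [DecidableEq ι]

/-- Apply a linear map (matrix `M`) to the `c`-th slot of a tensor. -/
noncomputable def mapSlot {α : ι → Type} [∀ i, Fintype (α i)] (c : ι) (M : α c → α c → ℂ)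
    (T : (∀ i, α i) → ℂ) : (∀ i, α i) → ℂ :=
  fun m => ∑ j, M (m c) j * T (Function.update m c j)

lemma mapSlot_prodTensor {α : ι → Type} [∀ i, Fintype (α i)] (c : ι)
    (M : α c → α c → ℂ) (v : ∀ i, α i → ℂ) :
    mapSlot c M (prodTensor v) =
      prodTensor (Function.update v c (fun a => ∑ j, M a j * v c j)) := by
  funext m
  show (∑ j, M (m c) j * ∏ i, v i (Function.update m c j i)) = ∏ i, _
  have key : ∀ j : α c, (∏ i, v i (Function.update m c j i)) =
      v c j * ∏ i ∈ Finset.univ.erase c, v i (m i) := by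
    intro j
    rw [← Finset.mul_prod_erase Finset.univ _ (Finset.mem_univ c)]
    rw [Function.update_self]
    congr 1
    refine Finset.prod_congr rfl (fun i hi => ?_)
    rw [Function.update_of_ne (Finset.ne_of_mem_erase hi)]
  have key2 : (∏ i, Function.update v c (fun a => ∑ j, M a j * v c j) i (m i)) =
      (∑ j, M (m c) j * v c j) * ∏ i ∈ Finset.univ.erase c, v i (m i) := by
    rw [← Finset.mul_prod_erase Finset.univ _ (Finset.mem_univ c)]
    rw [Function.update_self]
    congr 1
    refine Finset.prod_congr rfl (fun i hi => ?_)
    rw [Function.update_of_ne (Finset.ne_of_mem_erase hi)]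
  rw [key2, Finset.sum_mul]
  refine Finset.sum_congr rfl (fun j _ => ?_)
  rw [key j, mul_assoc]

lemma mapSlot_sum {α : ι → Type} [∀ i, Fintype (α i)] (c : ι) (M : α c → α c → ℂ)
    {P : Type} (s : Finset P) (f : P → (∀ i, α i) → ℂ) :
    mapSlot c M (∑ p ∈ s, f p) = ∑ p ∈ s, mapSlot c M (f p) := by
  funext m
  show (∑ j, M (m c) j * (∑ p ∈ s, f p) (Function.update m c j)) = _
  rw [Finset.sum_apply]
  simp_rw [Finset.sum_apply, Finset.mul_sum]
  rw [Finset.sum_comm]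
  rfl

/-- Euclidean pairing of coefficient vectors. -/
noncomputable def cdot {κ : Type} [Fintype κ] (f v : κ → ℂ) : ℂ := ∑ k, f k * v k

/-- Contraction of the `c`-th slot of a tensor with a covector `f` (the result
is constant in the `c`-th slot). -/
noncomputable def contractSlot {β : ι → Type} [∀ i, Fintype (β i)] (c : ι) (f : β c → ℂ)
    (Q : (∀ i, β i) → ℂ) : (∀ i, β i) → ℂ :=
  fun m => ∑ k, f k * Q (Function.update m c k)

/-- The (alive-set-relative) persistence chain condition, processing slots in
the order given by the list. -/
def AliveChain {β : ι → Type} [∀ i, Fintype (β i)] :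
    List ι → (∀ i, Finset (β i)) → ((∀ i, β i) → ℂ) → Prop
  | [], _, _ => True
  | [_], _, _ => True
  | c :: tail, alive, Q =>
      (∀ f : β c → ℂ, (∀ k, k ∉ alive c → f k = 0) → f ≠ 0 →
        contractSlot c f Q ≠ 0) ∧
      ∃ v : β c → ℂ, v ≠ 0 ∧ (∀ k, k ∉ alive c → v k = 0) ∧
        ∀ f : β c → ℂ, (∀ k, k ∉ alive c → f k = 0) → cdot f v ≠ 0 →
          AliveChain tail alive (contractSlot c f Q)

lemma aliveChain_cons_cons {β : ι → Type} [∀ i, Fintype (β i)]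
    {c c₂ : ι} {t : List ι} {alive : ∀ i, Finset (β i)} {Q : (∀ i, β i) → ℂ} :
    AliveChain (c :: c₂ :: t) alive Q ↔
      ((∀ f : β c → ℂ, (∀ k, k ∉ alive c → f k = 0) → f ≠ 0 →
        contractSlot c f Q ≠ 0) ∧
      ∃ v : β c → ℂ, v ≠ 0 ∧ (∀ k, k ∉ alive c → v k = 0) ∧
        ∀ f : β c → ℂ, (∀ k, k ∉ alive c → f k = 0) → cdot f v ≠ 0 →
          AliveChain (c₂ :: t) alive (contractSlot c f Q)) := Iff.rfl

lemma aliveChain_congr {β : ι → Type} [∀ i, Fintype (β i)] :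
    ∀ (L : List ι) (alive₁ alive₂ : ∀ i, Finset (β i)) (Q : (∀ i, β i) → ℂ),
      (∀ i ∈ L, alive₁ i = alive₂ i) → AliveChain L alive₁ Q → AliveChain L alive₂ Q
  | [], _, _, _, _, h => h
  | [_], _, _, _, _, h => h
  | c :: c₂ :: t, alive₁, alive₂, Q, hag, h => by
      rw [aliveChain_cons_cons] at h ⊢
      obtain ⟨h1, v, hv0, hvs, h2⟩ := h
      have hc : alive₁ c = alive₂ c := hag c (by simp)
      refine ⟨by rw [← hc]; exact h1, v, hv0, by rw [← hc]; exact hvs, ?_⟩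
      intro f hfs hfv
      exact aliveChain_congr (c₂ :: t) alive₁ alive₂ _
        (fun i hi => hag i (List.mem_cons_of_mem c hi))
        (h2 f (by rw [hc]; exact hfs) hfv)

lemma aliveChain_map {ι' : Type} [Fintype ι'] [DecidableEq ι']
    {β : ι → Type} [∀ i, Fintype (β i)] (hne : ∀ i, Nonempty (β i))
    (e : ι' → ι) (he : Function.Injective e) :
    ∀ (L : List ι') (alive : ∀ i, Finset (β i))
      (Q' : (∀ i', β (e i')) → ℂ) (Q : (∀ i, β i) → ℂ),
      (∀ m, Q m = Q' (fun i' => m (e i'))) →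
      AliveChain L (fun i' => alive (e i')) Q' → AliveChain (L.map e) alive Q
  | [], _, _, _, _, _ => trivial
  | [_], _, _, _, _, _ => trivial
  | c :: c₂ :: t, alive, Q', Q, hQ, h => by
      rw [aliveChain_cons_cons] at h
      obtain ⟨h1, v, hv0, hvs, h2⟩ := h
      have hkey : ∀ (f : β (e c) → ℂ) m,
          contractSlot (e c) f Q m = contractSlot c f Q' (fun i' => m (e i')) := by
        intro f m
        show (∑ k, f k * Q (Function.update m (e c) k)) = ∑ k, f k * Q' _
        refine Finset.sum_congr rfl (fun k _ => ?_)
        rw [hQ]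
        refine congrArg (fun z => f k * Q' z) (funext fun i' => ?_)
        by_cases hi : i' = c
        · subst hi; rw [Function.update_self, Function.update_self]
        · rw [Function.update_of_ne (fun hh => hi (he hh)), Function.update_of_ne hi]
      have hext : ∀ m' : ∀ i', β (e i'), ∃ m : ∀ i, β i, (fun i' => m (e i')) = m' := by
        intro m'
        classical
        have key : ∀ (i' : ι') (j : ι') (hj : e j = e i'),
            cast (congrArg β hj) (m' j) = m' i' := by
          intro i' j hj
          obtain rfl : j = i' := he hj
          exact eq_of_heq (cast_heq _ _)
        refine ⟨fun i => if h : ∃ j, e j = i then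
          cast (congrArg β h.choose_spec) (m' h.choose) else (hne i).some,
          funext fun i' => ?_⟩
        have hex : ∃ j, e j = e i' := ⟨i', rfl⟩
        simp only [dif_pos hex]
        exact key i' hex.choose hex.choose_spec
      rw [List.map_cons, List.map_cons, aliveChain_cons_cons]
      refine ⟨?_, v, hv0, hvs, ?_⟩
      · intro f hfs hf0 hzero
        refine h1 f hfs hf0 ?_
        funext m'
        obtain ⟨m, hm⟩ := hext m'
        have := congrFun hzero m
        rw [hkey f m, hm] at this
        exact this
      · intro f hfs hfv
        have := h2 f hfs hfv
        rw [← List.map_cons]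
        exact aliveChain_map hne e he (c₂ :: t) alive _ _
          (fun m => hkey f m) this
end Aux2
section Aux3
open Finset

/-- The linear functional with coefficient vector `f`. -/
noncomputable def linOfVec {κ : Type} [Fintype κ] (f : κ → ℂ) : (κ → ℂ) →ₗ[ℂ] ℂ where
  toFun x := ∑ k, f k * x k
  map_add' x y := by simp [mul_add, Finset.sum_add_distrib]
  map_smul' c x := by
    simp only [Pi.smul_apply, smul_eq_mul, RingHom.id_apply, Finset.mul_sum]
    exact Finset.sum_congr rfl fun k _ => by ring

lemma linOfVec_delta {κ : Type} [Fintype κ] [DecidableEq κ] (f : κ → ℂ) (k : κ) :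
    linOfVec f (fun j => if j = k then 1 else 0) = f k := by
  show (∑ j, f j * if j = k then 1 else 0) = f k
  rw [Finset.sum_congr rfl (g := fun j => if j = k then f j else 0)
    (fun j _ => by by_cases h : j = k <;> simp [h])]
  rw [Finset.sum_ite_eq' Finset.univ k f]
  simp

lemma aliveChain_cons_of_ne_nil {ι : Type} [Fintype ι] [DecidableEq ι]
    {β : ι → Type} [∀ i, Fintype (β i)] {c : ι} {t : List ι}
    {alive : ∀ i, Finset (β i)} {Q : (∀ i, β i) → ℂ} (ht : t ≠ [])
    (h : (∀ f : β c → ℂ, (∀ k, k ∉ alive c → f k = 0) → f ≠ 0 →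
        contractSlot c f Q ≠ 0) ∧
      ∃ v : β c → ℂ, v ≠ 0 ∧ (∀ k, k ∉ alive c → v k = 0) ∧
        ∀ f : β c → ℂ, (∀ k, k ∉ alive c → f k = 0) → cdot f v ≠ 0 →
          AliveChain t alive (contractSlot c f Q)) :
    AliveChain (c :: t) alive Q := by
  cases t with
  | nil => exact absurd rfl ht
  | cons c₂ t₂ => exact (aliveChain_cons_cons).mpr h

lemma concise_contractSlot {n : ℕ} {β : Fin (n + 1) → Type} [∀ i, Fintype (β i)]
    {P : (∀ i, β i) → ℂ} (hc : Concise P 0) {f : β 0 → ℂ} (hf : f ≠ 0) :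
    contractSlot 0 f P ≠ 0 := by
  intro h0
  classical
  have hFI : FactorIn P 0 (LinearMap.ker (linOfVec f)) := by
    intro m
    rw [LinearMap.mem_ker]
    have := congrFun h0 m
    exact this
  have htop := hc _ hFI
  apply hf
  funext k
  have hk : (fun j => if j = k then (1:ℂ) else 0) ∈ LinearMap.ker (linOfVec f) := by
    rw [htop]; trivial
  rw [LinearMap.mem_ker, linOfVec_delta] at hk
  exact hk

lemma exists_perp {κ : Type} [Fintype κ]
    (S : Submodule ℂ (Module.Dual ℂ (κ → ℂ))) (hS : S ≠ ⊤) :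
    ∃ v : κ → ℂ, v ≠ 0 ∧ ∀ g ∈ S, g v = 0 := by
  have h1 : S.dualCoannihilator ≠ ⊥ := by
    intro hbot
    apply hS
    have h2 := Subspace.finrank_add_finrank_dualCoannihilator_eq S
    rw [hbot, finrank_bot, add_zero] at h2
    exact Submodule.eq_top_of_finrank_eq (by rw [h2, Subspace.dual_finrank_eq])
  obtain ⟨v, hv, hv0⟩ := Submodule.exists_mem_ne_zero_of_ne_bot h1
  exact ⟨v, hv0, fun g hg => (Submodule.mem_dualCoannihilator v).mp hv g hg⟩

lemma update_zero_eq_cons {n : ℕ} {β : Fin (n + 1) → Type}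
    (m : ∀ i, β i) (k : β 0) :
    Function.update m 0 k = Fin.cons k (fun i : Fin n => m i.succ) := by
  funext i
  refine Fin.cases ?_ (fun j => ?_) i
  · rw [Function.update_self]; rfl
  · rw [Function.update_of_ne (Fin.succ_ne_zero j)]
    rw [Fin.cons_succ]

lemma contractSlot_zero_eq {n : ℕ} {β : Fin (n + 1) → Type} [∀ i, Fintype (β i)]
    (f : β 0 → ℂ) (P : (∀ i, β i) → ℂ) (m : ∀ i, β i) :
    contractSlot 0 f P m = contractFirst (linOfVec f) P (fun i : Fin n => m i.succ) := by
  show (∑ k, f k * P (Function.update m 0 k)) = ∑ k, f k * P (Fin.cons k _)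
  exact Finset.sum_congr rfl fun k _ => by rw [update_zero_eq_cons]

theorem persistent_aliveChain : ∀ {n : ℕ} {β : Fin n → Type} [∀ i, Fintype (β i)],
    (∀ i, Nonempty (β i)) → ∀ P : (∀ i, β i) → ℂ, Persistent P →
    AliveChain (List.finRange n) (fun _ => Finset.univ) P := by
  intro n
  induction n using Nat.strong_induction_on with
  | _ n ih =>
    intro β instβ hne P hP
    match n, β, instβ, hne, P, hP, ih with
    | 0, β, instβ, hne, P, hP, ih => exact hP.elim
    | 1, β, instβ, hne, P, hP, ih => exact hP.elim
    | 2, β, instβ, hne, P, hP, ih =>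
      -- hP : Concise P 0
      have hfr : List.finRange 2 = [0, 1] := rfl
      rw [hfr]
      refine ⟨fun f _ hf0 => concise_contractSlot hP hf0,
        fun _ => 1, ?_, fun k hk => absurd (Finset.mem_univ k) hk, fun _ _ _ => trivial⟩
      obtain ⟨pt⟩ := hne 0
      intro hcon
      exact one_ne_zero (congrFun hcon pt)
    | (m + 3), β, instβ, hne, P, hP, ih =>
      obtain ⟨hconc, S, hS, hSP⟩ := hP
      obtain ⟨v, hv0, hvS⟩ := exists_perp S hS
      rw [List.finRange_succ]
      refine aliveChain_cons_of_ne_nil (by simp) ⟨fun f _ hf0 => concise_contractSlot hconc hf0,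
        v, hv0, fun k hk => absurd (Finset.mem_univ k) hk, ?_⟩
      intro f _ hfv
      have hlf : linOfVec f ∉ S := by
        intro hmem
        apply hfv
        exact hvS _ hmem
      have hpers := hSP _ hlf
      have hchain := ih (m + 2) (by omega) (fun i => hne i.succ)
        (contractFirst (linOfVec f) P) hpers
      exact aliveChain_map hne Fin.succ (Fin.succ_injective _)
        (List.finRange (m + 2)) (fun _ => Finset.univ)
        (contractFirst (linOfVec f) P) (contractSlot 0 f P)
        (fun m' => contractSlot_zero_eq f P m') hchain
end Aux3
section Aux4
open Finset

variable {ι : Type} [Fintype ι] [DecidableEq ι]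

lemma contractSlot_delta {β : ι → Type} [∀ i, Fintype (β i)] [∀ i, DecidableEq (β i)]
    (c : ι) (k₀ : β c) (K : (∀ i, β i) → ℂ) :
    contractSlot c (fun k => if k = k₀ then (1:ℂ) else 0) K
      = fun m => K (Function.update m c k₀) := by
  funext m
  show (∑ k, (if k = k₀ then (1:ℂ) else 0) * K (Function.update m c k)) = _
  rw [Finset.sum_congr rfl (g := fun k => if k = k₀ then K (Function.update m c k) else 0)
    (fun k _ => by by_cases h : k = k₀ <;> simp [h])]
  rw [Finset.sum_ite_eq' Finset.univ k₀ (fun k => K (Function.update m c k))]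
  simp

lemma sub_ite_mul {γ : Type} [DecidableEq γ] (a b j' : γ) (q : ℂ) (g : γ → ℂ) :
    ((if j' = a then (1:ℂ) else 0) - q * (if j' = b then 1 else 0)) * g j'
      = (if j' = a then g j' else 0) - q * (if j' = b then g j' else 0) := by
  by_cases h1 : j' = a <;> by_cases h2 : j' = b
  · simp only [if_pos h1, if_pos h2]; ring
  · simp only [if_pos h1, if_neg h2]; ring
  · simp only [if_neg h1, if_pos h2]; ring
  · simp only [if_neg h1, if_neg h2]; ring

theorem GS {α β : ι → Type} [∀ i, Fintype (α i)] [∀ i, Fintype (β i)]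
    [∀ i, DecidableEq (α i)] [∀ i, DecidableEq (β i)] :
    ∀ (L : List ι), L.Nodup → L.tail ≠ [] →
    ∀ (alive : ∀ i, Finset (β i)) (pin : ∀ i, β i)
      (T : (∀ i, α i) → ℂ) (R : (∀ i, α i ⊕ β i) → ℂ) (r : ℕ),
      (∀ a : ∀ i, α i, R (fun i => Sum.inl (a i)) = T a) →
      (∀ u : ∀ i, α i ⊕ β i, R u ≠ 0 →
        (∀ i, (u i).isLeft = true) ∨ (∀ i ∈ L.tail, (u i).isRight = true)) →
      AliveChain L alive (fun b => R (fun i => Sum.inr (if i ∈ L then b i else pin i))) →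
      (∀ i ∈ L, (alive i).Nonempty) →
      HasRankLE R r →
      tensorRank T + (((L.dropLast).map (fun i => (alive i).card - 1)).sum + 1) ≤ r := by
  intro L
  induction L with
  | nil => intro _ h2; exact absurd rfl h2
  | cons c tail ihL =>
    intro hnd htl
    cases tail with
    | nil => exact absurd rfl htl
    | cons c₂ tail₂ =>
      have hcnot : c ∉ c₂ :: tail₂ := (List.nodup_cons.mp hnd).1
      have hnd₂ : (c₂ :: tail₂).Nodup := (List.nodup_cons.mp hnd).2
      intro alive₀ pin₀ T R₀ r₀ hB1₀ hB2₀ hC₀ hane₀ hr₀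
      suffices H : ∀ (N : ℕ) (alive : ∀ i, Finset (β i)) (pin : ∀ i, β i)
          (R : (∀ i, α i ⊕ β i) → ℂ) (r : ℕ),
          (alive c).card ≤ N →
          (∀ a : ∀ i, α i, R (fun i => Sum.inl (a i)) = T a) →
          (∀ u : ∀ i, α i ⊕ β i, R u ≠ 0 →
            (∀ i, (u i).isLeft = true) ∨
            (∀ i ∈ (c₂ :: tail₂ : List ι), (u i).isRight = true)) →
          AliveChain (c :: c₂ :: tail₂) alive
            (fun b => R (fun i => Sum.inr (if i ∈ (c :: c₂ :: tail₂ : List ι) then b i else pin i))) →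
          (∀ i ∈ (c :: c₂ :: tail₂ : List ι), (alive i).Nonempty) →
          HasRankLE R r →
          tensorRank T +
            ((((c :: c₂ :: tail₂ : List ι).dropLast).map (fun i => (alive i).card - 1)).sum + 1) ≤ r by
        exact H (alive₀ c).card alive₀ pin₀ R₀ r₀ le_rfl hB1₀ hB2₀ hC₀ hane₀ hr₀
      intro N
      induction N with
      | zero =>
        intro alive pin R r hcard _ _ _ hane _
        exfalso
        obtain ⟨k, hk⟩ := hane c (by simp)
        rw [Finset.card_eq_zero.mp (Nat.le_zero.mp hcard)] at hk
        simp at hk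
      | succ N ihN =>
        intro alive pin R r hcard hB1 hB2 hC hane hr
        have hc2c : c₂ ≠ c := by
          intro h; apply hcnot; rw [← h]; exact List.mem_cons_self
        by_cases hone : (alive c).card = 1
        · -- alive c is a singleton
          obtain ⟨kstar, hks⟩ := Finset.card_eq_one.mp hone
          have hkmem : kstar ∈ alive c := by rw [hks]; exact Finset.mem_singleton_self _
          set f : β c → ℂ := fun k => if k = kstar then (1:ℂ) else 0 with hf
          have hfs : ∀ k, k ∉ alive c → f k = 0 := by
            intro k hk
            apply if_neg
            intro h; apply hk; rw [h]; exact hkmem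
          cases tail₂ with
          | nil =>
            -- FINAL STEP
            obtain ⟨x, hx⟩ := hr
            have hC1 := (aliveChain_cons_cons.mp hC).1
            have hfne : f ≠ 0 := by
              intro h
              have := congrFun h kstar
              simp [f] at this
            have hcne := hC1 f hfs hfne
            rw [contractSlot_delta] at hcne
            obtain ⟨m₀, hm₀⟩ := Function.ne_iff.mp hcne
            -- hm₀ : K (update m₀ c kstar) ≠ 0 where K is the embedded corner
            have hp0 : ∃ p0 : Fin r, x p0 c (Sum.inr kstar) ≠ 0 := by
              by_contra hall
              push_neg at hall
              apply hm₀
              show R _ = 0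
              rw [hx, Finset.sum_apply]
              refine Finset.sum_eq_zero fun p _ => ?_
              show (∏ i, x p i _) = 0
              apply Finset.prod_eq_zero (Finset.mem_univ c)
              have hEc : (Sum.inr (if c ∈ (c :: c₂ :: ([] : List ι)) then
                  Function.update m₀ c kstar c else pin c) : α c ⊕ β c) = Sum.inr kstar := by
                rw [if_pos (List.mem_cons_self), Function.update_self]
              rw [hEc]
              exact hall p
            obtain ⟨p0, hp0⟩ := hp0
            set cst : ℂ := x p0 c (Sum.inr kstar) with hcst
            set M₂ : (α c ⊕ β c) → (α c ⊕ β c) → ℂ := fun j j' =>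
              (if j' = j then 1 else 0) -
                (x p0 c j / cst) * (if j' = Sum.inr kstar then 1 else 0) with hM₂
            have hmap₂ : ∀ u, mapSlot c M₂ R u =
                R u - (x p0 c (u c) / cst) * R (Function.update u c (Sum.inr kstar)) := by
              intro u
              show (∑ j', M₂ (u c) j' * R (Function.update u c j')) = _
              have hterm : ∀ j', M₂ (u c) j' * R (Function.update u c j') =
                  (if j' = u c then R (Function.update u c j') else 0) -
                  (x p0 c (u c) / cst) *
                    (if j' = Sum.inr kstar then R (Function.update u c j') else 0) := by
                intro j'
                exact sub_ite_mul (u c) (Sum.inr kstar) j' (x p0 c (u c) / cst)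
                  (fun j' => R (Function.update u c j'))
              rw [Finset.sum_congr rfl (fun j' _ => hterm j'), Finset.sum_sub_distrib,
                ← Finset.mul_sum]
              rw [Finset.sum_ite_eq' Finset.univ (u c) (fun j' => R (Function.update u c j')),
                Finset.sum_ite_eq' Finset.univ (Sum.inr kstar)
                  (fun j' => R (Function.update u c j'))]
              simp [Function.update_eq_self]
            set w₂ : Fin r → ∀ i, α i ⊕ β i → ℂ := fun p =>
              Function.update (x p) c (fun j => ∑ j', M₂ j j' * x p c j') with hw₂def
            have hw₂ : mapSlot c M₂ R = ∑ p, prodTensor (w₂ p) := by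
              rw [hx, mapSlot_sum]
              exact Finset.sum_congr rfl fun p _ => mapSlot_prodTensor c M₂ (x p)
            have hwz : w₂ p0 c = 0 := by
              show Function.update (x p0) c _ c = 0
              rw [Function.update_self]
              funext j
              have hterm : ∀ j', M₂ j j' * x p0 c j' =
                  (if j' = j then x p0 c j' else 0) -
                  (x p0 c j / cst) * (if j' = Sum.inr kstar then x p0 c j' else 0) := by
                intro j'
                exact sub_ite_mul j (Sum.inr kstar) j' (x p0 c j / cst) (x p0 c)
              show (∑ j', M₂ j j' * x p0 c j') = 0
              rw [Finset.sum_congr rfl (fun j' _ => hterm j'), Finset.sum_sub_distrib,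
                ← Finset.mul_sum]
              rw [Finset.sum_ite_eq' Finset.univ j (fun j' => x p0 c j'),
                Finset.sum_ite_eq' Finset.univ (Sum.inr kstar) (fun j' => x p0 c j')]
              simp only [Finset.mem_univ, if_true]
              rw [div_mul_cancel₀ _ (by exact hp0)]
              ring
            have hT2 : ∀ a : ∀ i, α i, mapSlot c M₂ R (fun i => Sum.inl (a i)) = T a := by
              intro a
              rw [hmap₂]
              have h2 : R (Function.update (fun i => Sum.inl (a i)) c (Sum.inr kstar)) = 0 := by
                by_contra hne2
                rcases hB2 _ hne2 with hall | htail
                · have := hall c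
                  rw [Function.update_self] at this
                  simp at this
                · have := htail c₂ (List.mem_cons_self)
                  rw [Function.update_of_ne hc2c] at this
                  simp at this
              rw [h2, hB1]
              ring
            have hTrank : HasRankLE T (r - 1) := by
              refine hasRankLE_pred (fun p => fun i a => w₂ p i (Sum.inl a)) ?_ p0 ?_
              · funext a
                rw [← hT2 a]
                have := congrFun hw₂ (fun i => Sum.inl (a i))
                rw [this, Finset.sum_apply, Finset.sum_apply]
                rfl
              · apply prodTensor_eq_zero c
                funext a
                exact congrFun hwz (Sum.inl a)
            have hrklee := tensorRank_le_of hTrank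
            have hrpos : 0 < r := Fin.pos p0
            have hdl : ((c :: c₂ :: ([] : List ι)).dropLast) = [c] := rfl
            rw [hdl, List.map_cons, List.sum_cons, hone]
            simp only [List.map_nil, List.sum_nil]
            omega
          | cons c₃ tail₃ =>
            -- STEP B
            rw [aliveChain_cons_cons] at hC
            obtain ⟨hC1, v, hv0, hvs, hC2⟩ := hC
            have hvk : v kstar ≠ 0 := by
              intro h
              apply hv0
              funext k
              by_cases hk : k = kstar
              · rw [hk]; exact h
              · exact hvs k (by rw [hks]; simp [hk])
            have hfv : cdot f v ≠ 0 := by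
              show (∑ k, f k * v k) ≠ 0
              rw [Finset.sum_congr rfl (g := fun k => if k = kstar then v k else 0)
                (fun k _ => by by_cases h : k = kstar <;> simp [f, h])]
              rw [Finset.sum_ite_eq' Finset.univ kstar v]
              simpa using hvk
            have hch := hC2 f hfs hfv
            have heq : contractSlot c f
                (fun b => R (fun i => Sum.inr
                  (if i ∈ (c :: c₂ :: c₃ :: tail₃ : List ι) then b i else pin i)))
                = fun b => R (fun i => Sum.inr
                  (if i ∈ (c₂ :: c₃ :: tail₃ : List ι) then b i
                   else Function.update pin c kstar i)) := by
              rw [contractSlot_delta]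
              funext m
              refine congrArg R (funext fun i => ?_)
              by_cases hic : i = c
              · subst hic
                rw [if_pos (List.mem_cons_self), Function.update_self,
                  if_neg (fun h => hcnot h), Function.update_self]
              · rw [Function.update_of_ne hic]
                by_cases him : i ∈ (c₂ :: c₃ :: tail₃ : List ι)
                · rw [if_pos (List.mem_cons_of_mem _ him), if_pos him]
                · rw [if_neg (fun h => him ((List.mem_cons.mp h).resolve_left hic)),
                    if_neg him, Function.update_of_ne hic]
            rw [heq] at hch
            have hB2' : ∀ u : ∀ i, α i ⊕ β i, R u ≠ 0 →
                (∀ i, (u i).isLeft = true) ∨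
                (∀ i ∈ (c₃ :: tail₃ : List ι), (u i).isRight = true) := by
              intro u hu
              rcases hB2 u hu with h | h
              · exact Or.inl h
              · exact Or.inr (fun i hi => h i (List.mem_cons_of_mem _ hi))
            have hane' : ∀ i ∈ (c₂ :: c₃ :: tail₃ : List ι), (alive i).Nonempty :=
              fun i hi => hane i (List.mem_cons_of_mem _ hi)
            have hbound := ihL hnd₂ (by simp) alive (Function.update pin c kstar)
              T R r hB1 hB2' hch hane' hr
            have hdl : ((c :: c₂ :: c₃ :: tail₃ : List ι).dropLast) =
                c :: ((c₂ :: c₃ :: tail₃ : List ι).dropLast) := rfl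
            rw [hdl, List.map_cons, List.sum_cons, hone]
            omega
        · -- STEP A
          have hcard2 : 2 ≤ (alive c).card := by
            have := Finset.card_pos.mpr (hane c (List.mem_cons_self))
            omega
          obtain ⟨x, hx⟩ := hr
          rw [aliveChain_cons_cons] at hC
          obtain ⟨hC1, v, hv0, hvs, hC2⟩ := hC
          set LL : List ι := c :: c₂ :: tail₂ with hLL
          set K : (∀ i, β i) → ℂ :=
            fun b => R (fun i => Sum.inr (if i ∈ LL then b i else pin i)) with hKdef
          set y : Fin r → β c → ℂ := fun p k => x p c (Sum.inr k) with hy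
          have hKsum : ∀ (m : ∀ i, β i) (k : β c), K (Function.update m c k)
              = ∑ p, y p k * ∏ i ∈ Finset.univ.erase c,
                  x p i (Sum.inr (if i ∈ LL then m i else pin i)) := by
            intro m k
            show R _ = _
            rw [hx, Finset.sum_apply]
            refine Finset.sum_congr rfl fun p _ => ?_
            show (∏ i, x p i (Sum.inr (if i ∈ LL then Function.update m c k i else pin i))) = _
            rw [← Finset.mul_prod_erase Finset.univ _ (Finset.mem_univ c)]
            have hc : (if c ∈ LL then Function.update m c k c else pin c) = k := by
              rw [if_pos (List.mem_cons_self), Function.update_self]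
            rw [hc]
            congr 1
            refine Finset.prod_congr rfl fun i hi => ?_
            have hic : i ≠ c := Finset.ne_of_mem_erase hi
            rw [Function.update_of_ne hic]
          have hcontr : ∀ (g : β c → ℂ) (m : ∀ i, β i), contractSlot c g K m
              = ∑ p, (∑ k, g k * y p k) * ∏ i ∈ Finset.univ.erase c,
                  x p i (Sum.inr (if i ∈ LL then m i else pin i)) := by
            intro g m
            show (∑ k, g k * K (Function.update m c k)) = _
            rw [Finset.sum_congr rfl (fun k _ => by rw [hKsum m k])]
            simp_rw [Finset.mul_sum]
            rw [Finset.sum_comm]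
            refine Finset.sum_congr rfl fun p _ => ?_
            rw [Finset.sum_mul]
            exact Finset.sum_congr rfl fun k _ => by ring
          -- pivot selection
          have hpivot : ∃ k₀, k₀ ∈ alive c ∧ ∃ p0 : Fin r, y p0 k₀ ≠ 0 ∧
              (fun k => if k ∈ (alive c).erase k₀
                then v k - (y p0 k / y p0 k₀) * v k₀ else 0) ≠ 0 := by
            by_cases hex : ∃ k₀ ∈ alive c, v k₀ = 0
            · obtain ⟨k₀, hk₀, hvk₀⟩ := hex
              have hd : contractSlot c (fun k => if k = k₀ then (1:ℂ) else 0) K ≠ 0 := by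
                refine hC1 _ (fun k hk => if_neg (fun h => hk (by rw [h]; exact hk₀))) ?_
                intro h
                have := congrFun h k₀
                simp at this
              rw [contractSlot_delta] at hd
              obtain ⟨m₁, hm₁⟩ := Function.ne_iff.mp hd
              rw [hKsum] at hm₁
              obtain ⟨p0, _, hp0⟩ := Finset.exists_ne_zero_of_sum_ne_zero hm₁
              have hyp0 : y p0 k₀ ≠ 0 := fun h => hp0 (by rw [h, zero_mul])
              refine ⟨k₀, hk₀, p0, hyp0, ?_⟩
              obtain ⟨k₁, hk₁⟩ := Function.ne_iff.mp hv0
              have hk₁m : k₁ ∈ alive c := by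
                by_contra hcon
                exact hk₁ (hvs k₁ hcon)
              have hk₁0 : k₁ ≠ k₀ := by
                intro h; rw [h] at hk₁; exact hk₁ hvk₀
              intro hcon
              have := congrFun hcon k₁
              rw [if_pos (Finset.mem_erase.mpr ⟨hk₁0, hk₁m⟩), hvk₀] at this
              simp at this
              exact hk₁ this
            · push_neg at hex
              obtain ⟨k₁, hk₁, k₂, hk₂, hk12⟩ := Finset.one_lt_card.mp hcard2
              set g : β c → ℂ := fun k =>
                v k₂ * (if k = k₁ then 1 else 0) - v k₁ * (if k = k₂ then 1 else 0) with hg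
              have hgs : ∀ k, k ∉ alive c → g k = 0 := by
                intro k hk
                have h1 : k ≠ k₁ := fun h => hk (by rw [h]; exact hk₁)
                have h2 : k ≠ k₂ := fun h => hk (by rw [h]; exact hk₂)
                simp [hg, h1, h2]
              have hg0 : g ≠ 0 := by
                intro h
                have h2 : g k₁ = 0 := by rw [h]; rfl
                rw [hg] at h2
                simp only [eq_self_iff_true, if_true, if_pos rfl, if_neg hk12, mul_one, mul_zero, sub_zero] at h2
                exact hex k₂ hk₂ h2
              have hd := hC1 g hgs hg0
              obtain ⟨m₁, hm₁⟩ := Function.ne_iff.mp hd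
              rw [hcontr] at hm₁
              obtain ⟨p0, _, hp0⟩ := Finset.exists_ne_zero_of_sum_ne_zero hm₁
              have hcoef : (∑ k, g k * y p0 k) ≠ 0 := fun h => hp0 (by rw [h, zero_mul])
              have hcoef2 : (∑ k, g k * y p0 k) = v k₂ * y p0 k₁ - v k₁ * y p0 k₂ := by
                rw [Finset.sum_congr rfl (g := fun k =>
                  v k₂ * (if k = k₁ then y p0 k else 0) - v k₁ * (if k = k₂ then y p0 k else 0))
                  (fun k _ => by
                    rw [hg]
                    by_cases h1 : k = k₁ <;> by_cases h2 : k = k₂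
                    · simp only [if_pos h1, if_pos h2]; ring
                    · simp only [if_pos h1, if_neg h2]; ring
                    · simp only [if_neg h1, if_pos h2]; ring
                    · simp only [if_neg h1, if_neg h2]; ring)]
                rw [Finset.sum_sub_distrib, ← Finset.mul_sum, ← Finset.mul_sum,
                  Finset.sum_ite_eq' Finset.univ k₁ (y p0),
                  Finset.sum_ite_eq' Finset.univ k₂ (y p0)]
                simp
              -- find k₀ alive with y p0 k₀ ≠ 0
              have hyk : ∃ k₀ ∈ alive c, y p0 k₀ ≠ 0 := by
                by_contra hall
                push_neg at hall
                apply hcoef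
                rw [hcoef2, hall k₁ hk₁, hall k₂ hk₂]
                ring
              obtain ⟨k₀, hk₀, hyk₀⟩ := hyk
              refine ⟨k₀, hk₀, p0, hyk₀, ?_⟩
              intro hcon
              have hcol : ∀ k, k ∈ alive c → v k = (y p0 k / y p0 k₀) * v k₀ := by
                intro k hk
                by_cases hkk : k = k₀
                · rw [hkk, div_self hyk₀, one_mul]
                · have := congrFun hcon k
                  rw [if_pos (Finset.mem_erase.mpr ⟨hkk, hk⟩)] at this
                  have h0 : v k - y p0 k / y p0 k₀ * v k₀ = 0 := this
                  linear_combination h0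
              apply hcoef
              rw [hcoef2, hcol k₁ hk₁, hcol k₂ hk₂]
              field_simp
              ring
          obtain ⟨k₀, hk₀, p0, hy0, hvnew0⟩ := hpivot
          set cst : ℂ := y p0 k₀ with hcstdef
          set lamb : β c → ℂ := fun k => y p0 k / cst with hlamb
          set vnew : β c → ℂ :=
            fun k => if k ∈ (alive c).erase k₀ then v k - lamb k * v k₀ else 0 with hvnew
          set keepC : (α c ⊕ β c) → ℂ :=
            Sum.elim (fun _ => 1) (fun k => if k ∈ (alive c).erase k₀ then 1 else 0) with hkeep
          set M : (α c ⊕ β c) → (α c ⊕ β c) → ℂ := fun j j' =>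
            keepC j * ((if j' = j then 1 else 0) -
              (x p0 c j / cst) * (if j' = Sum.inr k₀ then 1 else 0)) with hM
          have hmap : ∀ u, mapSlot c M R u = keepC (u c) *
              (R u - (x p0 c (u c) / cst) * R (Function.update u c (Sum.inr k₀))) := by
            intro u
            show (∑ j', M (u c) j' * R (Function.update u c j')) = _
            have hterm : ∀ j', M (u c) j' * R (Function.update u c j') =
                keepC (u c) * ((if j' = u c then R (Function.update u c j') else 0) -
                  (x p0 c (u c) / cst) *
                  (if j' = Sum.inr k₀ then R (Function.update u c j') else 0)) := by
              intro j'
              have := sub_ite_mul (u c) (Sum.inr k₀) j' (x p0 c (u c) / cst)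
                (fun j' => R (Function.update u c j'))
              calc M (u c) j' * R (Function.update u c j')
                  = keepC (u c) * (((if j' = u c then (1:ℂ) else 0) -
                    (x p0 c (u c) / cst) * (if j' = Sum.inr k₀ then 1 else 0)) *
                    R (Function.update u c j')) := by rw [hM]; ring
                _ = _ := by rw [this]
            rw [Finset.sum_congr rfl (fun j' _ => hterm j'), ← Finset.mul_sum,
              Finset.sum_sub_distrib, ← Finset.mul_sum]
            rw [Finset.sum_ite_eq' Finset.univ (u c) (fun j' => R (Function.update u c j')),
              Finset.sum_ite_eq' Finset.univ (Sum.inr k₀)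
                (fun j' => R (Function.update u c j'))]
            simp [Function.update_eq_self]
          set w : Fin r → ∀ i, α i ⊕ β i → ℂ := fun p =>
            Function.update (x p) c (fun j => ∑ j', M j j' * x p c j') with hwdef
          have hw : mapSlot c M R = ∑ p, prodTensor (w p) := by
            rw [hx, mapSlot_sum]
            exact Finset.sum_congr rfl fun p _ => mapSlot_prodTensor c M (x p)
          have hcst0 : cst ≠ 0 := hy0
          have hwz : w p0 c = 0 := by
            show Function.update (x p0) c _ c = 0
            rw [Function.update_self]
            funext j
            show (∑ j', M j j' * x p0 c j') = 0
            have hterm : ∀ j', M j j' * x p0 c j' =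
                keepC j * ((if j' = j then x p0 c j' else 0) -
                  (x p0 c j / cst) * (if j' = Sum.inr k₀ then x p0 c j' else 0)) := by
              intro j'
              have := sub_ite_mul j (Sum.inr k₀) j' (x p0 c j / cst) (x p0 c)
              calc M j j' * x p0 c j'
                  = keepC j * (((if j' = j then (1:ℂ) else 0) -
                    (x p0 c j / cst) * (if j' = Sum.inr k₀ then 1 else 0)) * x p0 c j') := by
                      rw [hM]; ring
                _ = _ := by rw [this]
            rw [Finset.sum_congr rfl (fun j' _ => hterm j'), ← Finset.mul_sum,
              Finset.sum_sub_distrib, ← Finset.mul_sum]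
            rw [Finset.sum_ite_eq' Finset.univ j (x p0 c),
              Finset.sum_ite_eq' Finset.univ (Sum.inr k₀) (x p0 c)]
            have : x p0 c (Sum.inr k₀) = cst := rfl
            simp only [Finset.mem_univ, if_true, this]
            rw [div_mul_cancel₀ _ hcst0]
            ring
          have hR' : HasRankLE (mapSlot c M R) (r - 1) :=
            hasRankLE_pred w hw p0 (prodTensor_eq_zero c hwz)
          have hB1' : ∀ a : ∀ i, α i, mapSlot c M R (fun i => Sum.inl (a i)) = T a := by
            intro a
            rw [hmap]
            have h2 : R (Function.update (fun i => Sum.inl (a i)) c (Sum.inr k₀)) = 0 := by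
              by_contra hne2
              rcases hB2 _ hne2 with hall | htail
              · have := hall c
                rw [Function.update_self] at this
                simp at this
              · have := htail c₂ (List.mem_cons_self)
                rw [Function.update_of_ne hc2c] at this
                simp at this
            rw [h2, hB1]
            show (1:ℂ) * _ = _
            ring
          have hB2' : ∀ u : ∀ i, α i ⊕ β i, mapSlot c M R u ≠ 0 →
              (∀ i, (u i).isLeft = true) ∨
              (∀ i ∈ (c₂ :: tail₂ : List ι), (u i).isRight = true) := by
            intro u hu
            rw [hmap] at hu
            by_cases hRu : R u = 0
            · have h2 : R (Function.update u c (Sum.inr k₀)) ≠ 0 := by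
                intro h
                apply hu
                rw [hRu, h]
                ring
              rcases hB2 _ h2 with hall | htail
              · exfalso
                have := hall c
                rw [Function.update_self] at this
                simp at this
              · right
                intro i hi
                have hic : i ≠ c := fun h => hcnot (h ▸ hi)
                have := htail i hi
                rwa [Function.update_of_ne hic] at this
            · exact hB2 u hRu
          -- corner relations
          set fhat : (β c → ℂ) → (β c → ℂ) := fun g => fun k =>
            g k - (∑ k', g k' * lamb k') * (if k = k₀ then 1 else 0) with hfhat
          have hupd : ∀ (m : ∀ i, β i) (k : β c),
              (fun i => (Sum.inr (if i ∈ LL then Function.update m c k i else pin i) : α i ⊕ β i))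
              = Function.update
                  (fun i => (Sum.inr (if i ∈ LL then m i else pin i) : α i ⊕ β i)) c
                  (Sum.inr k) := by
            intro m k
            funext i
            by_cases hic : i = c
            · subst hic
              rw [Function.update_self, if_pos (List.mem_cons_self), Function.update_self]
            · rw [Function.update_of_ne hic, Function.update_of_ne hic]
          have hK'eval : ∀ (m : ∀ i, β i) (k : β c),
              mapSlot c M R (fun i => Sum.inr (if i ∈ LL then Function.update m c k i else pin i))
              = (if k ∈ (alive c).erase k₀ then 1 else 0) *
                (K (Function.update m c k) - lamb k * K (Function.update m c k₀)) := by
            intro m k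
            have eK : ∀ k' : β c, K (Function.update m c k') =
                R (Function.update
                  (fun i => (Sum.inr (if i ∈ LL then m i else pin i) : α i ⊕ β i)) c
                  (Sum.inr k')) := fun k' => congrArg R (hupd m k')
            rw [hupd m k, hmap, Function.update_self, Function.update_idem,
              ← eK k, ← eK k₀]
            have h1 : keepC (Sum.inr k) = (if k ∈ (alive c).erase k₀ then 1 else 0) := rfl
            have h2 : x p0 c (Sum.inr k) / cst = lamb k := rfl
            rw [h1, h2]
          have hK'contr : ∀ g : β c → ℂ, (∀ k, k ∉ (alive c).erase k₀ → g k = 0) →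
              contractSlot c g (fun b => mapSlot c M R
                (fun i => Sum.inr (if i ∈ LL then b i else pin i)))
              = contractSlot c (fhat g) K := by
            intro g hgs
            funext m
            show (∑ k, g k * mapSlot c M R _) = ∑ k, fhat g k * K (Function.update m c k)
            have hterm : ∀ k, g k * mapSlot c M R
                (fun i => Sum.inr (if i ∈ LL then Function.update m c k i else pin i))
                = g k * K (Function.update m c k) -
                  (g k * lamb k) * K (Function.update m c k₀) := by
              intro k
              rw [hK'eval m k]
              by_cases hk : k ∈ (alive c).erase k₀
              · rw [if_pos hk]; ring
              · rw [hgs k hk]; ring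
            rw [Finset.sum_congr rfl (fun k _ => hterm k), Finset.sum_sub_distrib]
            have hterm2 : ∀ k, fhat g k * K (Function.update m c k)
                = g k * K (Function.update m c k) -
                  (∑ k', g k' * lamb k') * (if k = k₀ then K (Function.update m c k) else 0) := by
              intro k
              show (g k - _ * _) * _ = _
              by_cases hk : k = k₀
              · simp only [if_pos hk]; ring
              · simp only [if_neg hk]; ring
            rw [Finset.sum_congr rfl (fun k _ => hterm2 k), Finset.sum_sub_distrib]
            congr 1
            rw [← Finset.mul_sum,
              Finset.sum_ite_eq' Finset.univ k₀ (fun k => K (Function.update m c k))]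
            rw [Finset.sum_mul]
            simp only [Finset.mem_univ, if_true]
            all_goals first
            | exact Finset.sum_congr rfl fun k _ => by ring
            | rfl
          have hfhat_supp : ∀ g : β c → ℂ, (∀ k, k ∉ (alive c).erase k₀ → g k = 0) →
              ∀ k, k ∉ alive c → fhat g k = 0 := by
            intro g hgs k hk
            have h1 : g k = 0 := hgs k (fun hmem => hk (Finset.mem_of_mem_erase hmem))
            have h2 : k ≠ k₀ := fun h => hk (by rw [h]; exact hk₀)
            show g k - _ * _ = 0
            rw [h1, if_neg h2]
            ring
          have hfhat_ne : ∀ g : β c → ℂ, (∀ k, k ∉ (alive c).erase k₀ → g k = 0) →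
              g ≠ 0 → fhat g ≠ 0 := by
            intro g hgs hg0
            obtain ⟨k₁, hk₁⟩ := Function.ne_iff.mp hg0
            have hk₁m : k₁ ∈ (alive c).erase k₀ := by
              by_contra hcon
              exact hk₁ (hgs k₁ hcon)
            have hk₁0 : k₁ ≠ k₀ := (Finset.mem_erase.mp hk₁m).1
            intro hcon
            apply hk₁
            have := congrFun hcon k₁
            show g k₁ = 0
            have h2 : g k₁ - (∑ k', g k' * lamb k') * (if k₁ = k₀ then 1 else 0) = 0 := this
            rw [if_neg hk₁0, mul_zero, sub_zero] at h2
            exact h2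
          have hfhat_dot : ∀ g : β c → ℂ, (∀ k, k ∉ (alive c).erase k₀ → g k = 0) →
              cdot (fhat g) v = cdot g vnew := by
            intro g hgs
            show (∑ k, fhat g k * v k) = ∑ k, g k * vnew k
            have hterm : ∀ k, fhat g k * v k = g k * v k -
                (∑ k', g k' * lamb k') * (if k = k₀ then v k else 0) := by
              intro k
              show (g k - _ * _) * v k = _
              by_cases hk : k = k₀
              · simp only [if_pos hk]; ring
              · simp only [if_neg hk]; ring
            have hterm2 : ∀ k, g k * vnew k = g k * v k - (g k * lamb k) * v k₀ := by
              intro k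
              by_cases hk : k ∈ (alive c).erase k₀
              · show g k * (if _ then _ else _) = _
                rw [if_pos hk]
                ring
              · show g k * (if _ then _ else _) = _
                rw [if_neg hk, hgs k hk]
                ring
            rw [Finset.sum_congr rfl (fun k _ => hterm k), Finset.sum_sub_distrib,
              Finset.sum_congr rfl (fun k _ => hterm2 k), Finset.sum_sub_distrib]
            congr 1
            rw [← Finset.mul_sum, Finset.sum_ite_eq' Finset.univ k₀ v, Finset.sum_mul]
            simp only [Finset.mem_univ, if_true]
            all_goals first
            | exact Finset.sum_congr rfl fun k _ => by ring
            | rfl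
          set alive' : ∀ i, Finset (β i) :=
            Function.update alive c ((alive c).erase k₀) with halive'
          have halivec : alive' c = (alive c).erase k₀ := by
            rw [halive', Function.update_self]
          have hC' : AliveChain LL alive' (fun b => mapSlot c M R
              (fun i => Sum.inr (if i ∈ LL then b i else pin i))) := by
            refine (aliveChain_cons_cons).mpr ⟨?_, vnew, hvnew0, ?_, ?_⟩
            · intro g hgs hg0
              rw [halivec] at hgs
              rw [hK'contr g hgs]
              exact hC1 _ (hfhat_supp g hgs) (hfhat_ne g hgs hg0)
            · intro k hk
              rw [halivec] at hk
              simp only [hvnew]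
              rw [if_neg hk]
            · intro g hgs hgv
              rw [halivec] at hgs
              rw [hK'contr g hgs]
              refine aliveChain_congr _ alive alive' _ ?_
                (hC2 (fhat g) (hfhat_supp g hgs) ?_)
              · intro i hi
                have hic : i ≠ c := fun h => hcnot (h ▸ hi)
                rw [halive', Function.update_of_ne hic]
              · rw [hfhat_dot g hgs]
                exact hgv
          have hane' : ∀ i ∈ LL, (alive' i).Nonempty := by
            intro i hi
            by_cases hic : i = c
            · subst hic
              rw [halivec]
              rw [← Finset.card_pos, Finset.card_erase_of_mem hk₀]
              omega
            · rw [halive', Function.update_of_ne hic]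
              exact hane i hi
          have hcard' : (alive' c).card ≤ N := by
            rw [halivec, Finset.card_erase_of_mem hk₀]
            omega
          have hbound := ihN alive' pin (mapSlot c M R) (r - 1) hcard' hB1' hB2' hC' hane' hR'
          have hdl : (LL.dropLast) = c :: ((c₂ :: tail₂ : List ι).dropLast) := rfl
          rw [hdl, List.map_cons, List.sum_cons] at hbound ⊢
          have hmapeq : ((c₂ :: tail₂ : List ι).dropLast).map (fun i => ((alive' i).card - 1))
              = ((c₂ :: tail₂ : List ι).dropLast).map (fun i => ((alive i).card - 1)) := by
            refine List.map_congr_left fun i hi => ?_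
            have him : i ∈ (c₂ :: tail₂ : List ι) := (List.dropLast_sublist _).subset hi
            have hic : i ≠ c := fun h => hcnot (h ▸ him)
            rw [halive', Function.update_of_ne hic]
          rw [hmapeq, halivec, Finset.card_erase_of_mem hk₀] at hbound
          have hrpos : 0 < r := Fin.pos p0
          omega
end Aux4
section Aux5
open Finset

lemma hasRankLE_directSum {ι : Type} [Fintype ι] [Nonempty ι] {α β : ι → Type}
    {T : (∀ i, α i) → ℂ} {S : (∀ i, β i) → ℂ} {r s : ℕ}
    (hT : HasRankLE T r) (hS : HasRankLE S s) :
    HasRankLE (directSum T S) (r + s) := by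
  obtain ⟨v, hv⟩ := hT
  obtain ⟨w, hw⟩ := hS
  refine ⟨Fin.addCases (fun p => fun i => Sum.elim (v p i) 0)
    (fun q => fun i => Sum.elim 0 (w q i)), ?_⟩
  funext m
  rw [Finset.sum_apply, Fin.sum_univ_add]
  simp only [Fin.addCases_left, Fin.addCases_right]
  obtain ⟨i₀⟩ := ‹Nonempty ι›
  show directSum T S m = (∑ p : Fin r, prodTensor (fun i => Sum.elim (v p i) 0) m)
    + ∑ q : Fin s, prodTensor (fun i => Sum.elim 0 (w q i)) m
  unfold directSum
  by_cases hL : ∀ i, (m i).isLeft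
  · rw [dif_pos hL]
    have h2 : (∑ q : Fin s, prodTensor (fun i => Sum.elim 0 (w q i)) m) = 0 := by
      refine Finset.sum_eq_zero fun q _ => ?_
      apply Finset.prod_eq_zero (Finset.mem_univ i₀)
      have := hL i₀
      rcases hm : m i₀ with a | b
      · rfl
      · rw [hm] at this; simp at this
    have h1 : (∑ p : Fin r, prodTensor (fun i => Sum.elim (v p i) 0) m)
        = T (fun i => (m i).getLeft (hL i)) := by
      rw [hv, Finset.sum_apply]
      refine Finset.sum_congr rfl fun p _ => ?_
      show (∏ i, Sum.elim (v p i) 0 (m i)) = ∏ i, v p i ((m i).getLeft (hL i))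
      refine Finset.prod_congr rfl fun i _ => ?_
      obtain ⟨a, ha⟩ := Sum.isLeft_iff.mp (hL i)
      simp [ha]
    rw [h1, h2, add_zero]
  · rw [dif_neg hL]
    push_neg at hL
    obtain ⟨i₁, hi₁⟩ := hL
    have h1 : (∑ p : Fin r, prodTensor (fun i => Sum.elim (v p i) 0) m) = 0 := by
      refine Finset.sum_eq_zero fun p _ => ?_
      apply Finset.prod_eq_zero (Finset.mem_univ i₁)
      rcases hm : m i₁ with a | b
      · rw [hm] at hi₁; simp at hi₁
      · rfl
    by_cases hR : ∀ i, (m i).isRight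
    · rw [dif_pos hR]
      have h2 : (∑ q : Fin s, prodTensor (fun i => Sum.elim 0 (w q i)) m)
          = S (fun i => (m i).getRight (hR i)) := by
        rw [hw, Finset.sum_apply]
        refine Finset.sum_congr rfl fun q _ => ?_
        show (∏ i, Sum.elim 0 (w q i) (m i)) = ∏ i, w q i ((m i).getRight (hR i))
        refine Finset.prod_congr rfl fun i _ => ?_
        obtain ⟨b, hb⟩ := Sum.isRight_iff.mp (hR i)
        simp [hb]
      rw [h1, h2, zero_add]
    · rw [dif_neg hR]
      push_neg at hR
      obtain ⟨i₂, hi₂⟩ := hR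
      have h2 : (∑ q : Fin s, prodTensor (fun i => Sum.elim 0 (w q i)) m) = 0 := by
        refine Finset.sum_eq_zero fun q _ => ?_
        apply Finset.prod_eq_zero (Finset.mem_univ i₂)
        rcases hm : m i₂ with a | b
        · rfl
        · rw [hm] at hi₂; simp at hi₂
      rw [h1, h2, add_zero]

lemma sum_dropLast_finRange (n : ℕ) (g : Fin n → ℕ) :
    (((List.finRange n).dropLast).map g).sum
      = ∑ k ∈ Finset.univ.filter (fun k : Fin n => (k : ℕ) + 1 < n), g k := by
  have hnd : ((List.finRange n).dropLast).Nodup :=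
    (List.nodup_finRange n).sublist (List.dropLast_sublist _)
  rw [← List.sum_toFinset _ hnd]
  refine (Finset.sum_congr ?_ (fun _ _ => rfl)).symm
  ext k
  simp only [List.mem_toFinset, Finset.mem_filter, Finset.mem_univ, true_and]
  rw [List.mem_iff_getElem]
  constructor
  · intro hk
    refine ⟨(k : ℕ), ?_, ?_⟩
    · rw [List.length_dropLast, List.length_finRange]; omega
    · rw [List.getElem_dropLast, List.getElem_finRange]
      exact Fin.ext rfl
  · rintro ⟨j, hj, hjk⟩
    rw [List.getElem_dropLast, List.getElem_finRange] at hjk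
    have h1 : (k : ℕ) = j := by rw [← hjk]; rfl
    rw [List.length_dropLast, List.length_finRange] at hj
    omega

end Aux5
lemma persistent_two_le : ∀ {n : ℕ} {β : Fin n → Type} {P : (∀ i, β i) → ℂ},
    Persistent P → 2 ≤ n
  | 0, _, _, h => h.elim
  | 1, _, _, h => h.elim
  | (m + 2), _, _, _ => by omega
/-- the tensor rank is additive on direct sums with a persistent
summand of the minimum possible rank `Σ_{k=1}^{n-1}(dim V_k − 1) + 1`. -/
theorem directSum_rank_additive
    {n : ℕ} {α β : Fin n → Type} [∀ i, Fintype (α i)] [∀ i, Fintype (β i)]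
    (P : (∀ i, β i) → ℂ) (hP : Persistent P)
    (hmin : tensorRank P =
      (∑ k ∈ Finset.univ.filter (fun k : Fin n => (k : ℕ) + 1 < n),
        (Fintype.card (β k) - 1)) + 1)
    (T : (∀ i, α i) → ℂ) :
    tensorRank (directSum T P) = tensorRank T + tensorRank P := by
  classical
  have hn2 : 2 ≤ n := persistent_two_le hP
  obtain ⟨m, rfl⟩ : ∃ m, n = m + 2 := ⟨n - 2, by omega⟩
  have hne : ∀ i, Nonempty (β i) := by
    by_contra hcon
    push_neg at hcon
    obtain ⟨i₀, hi₀⟩ := hcon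
    have hrk0 : HasRankLE P 0 := ⟨fun p => p.elim0, funext fun b => hi₀.elim' (b i₀)⟩
    have h0 : tensorRank P = 0 := Nat.le_zero.mp (tensorRank_le_of hrk0)
    rw [hmin] at h0
    omega
  have hT := hasRankLE_tensorRank T
  have hPr := hasRankLE_tensorRank P
  have hD : HasRankLE (directSum T P) (tensorRank T + tensorRank P) :=
    hasRankLE_directSum hT hPr
  have hub : tensorRank (directSum T P) ≤ tensorRank T + tensorRank P :=
    tensorRank_le_of hD
  have hDrank : HasRankLE (directSum T P) (tensorRank (directSum T P)) :=
    hasRankLE_tensorRank _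
  have hchain := persistent_aliveChain hne P hP
  set pin : ∀ i, β i := fun i => (hne i).some with hpin
  have hB1 : ∀ a : ∀ i, α i, directSum T P (fun i => Sum.inl (a i)) = T a := by
    intro a
    simp [directSum]
  have hB2 : ∀ u : ∀ i : Fin (m + 2), α i ⊕ β i, directSum T P u ≠ 0 →
      (∀ i, (u i).isLeft = true) ∨
      (∀ i ∈ (List.finRange (m + 2)).tail, (u i).isRight = true) := by
    intro u hu
    by_cases h : ∀ i, (u i).isLeft = true
    · exact Or.inl h
    · right
      intro i _
      by_contra hcon
      apply hu
      unfold directSum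
      rw [dif_neg h, dif_neg (fun hr => hcon (hr i))]
  have hKeq : (fun b => directSum T P
      (fun i => Sum.inr (if i ∈ List.finRange (m + 2) then b i else pin i))) = P := by
    funext b
    have he : (fun i => (Sum.inr (if i ∈ List.finRange (m + 2) then b i else pin i)
        : α i ⊕ β i)) = fun i => Sum.inr (b i) :=
      funext fun i => by rw [if_pos (List.mem_finRange i)]
    rw [he]
    simp [directSum]
  have hC : AliveChain (List.finRange (m + 2)) (fun _ => Finset.univ)
      (fun b => directSum T P
        (fun i => Sum.inr (if i ∈ List.finRange (m + 2) then b i else pin i))) := by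
    rw [hKeq]
    exact hchain
  have htl : (List.finRange (m + 2)).tail ≠ [] := by
    rw [List.finRange_succ]
    simp [List.finRange_succ]
  have hlow := GS (List.finRange (m + 2)) (List.nodup_finRange _) htl
    (fun _ => Finset.univ) pin T (directSum T P) (tensorRank (directSum T P))
    hB1 hB2 hC (fun i _ => Finset.univ_nonempty) hDrank
  rw [sum_dropLast_finRange] at hlow
  have hsum : (∑ k ∈ Finset.univ.filter (fun k : Fin (m + 2) => (k : ℕ) + 1 < m + 2),
        ((Finset.univ : Finset (β k)).card - 1))
      = ∑ k ∈ Finset.univ.filter (fun k : Fin (m + 2) => (k : ℕ) + 1 < m + 2),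
        (Fintype.card (β k) - 1) :=
    Finset.sum_congr rfl fun k _ => by rw [Finset.card_univ]
  rw [hsum] at hlow
  omega

end QIT
end
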